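/- arXiv:1810.06226 — 8 statements merged into one kernel-verified Lean document; each statement's English description precedes it below -/
import Mathlib

section
/- Let p be a continuously differentiable, positive probability density on ℝ with distribution function P. For fixed t ∈ ℝ, define f_t(x) = (1/p(x)) ∫_{-∞}^x (1_{(-∞,t]}(s) − P(t)) p(s) ds. Then f_t is differentiable on ℝ \ {t} with f_t'(x) = −(p'(x)/p(x)) f_t(x) + 1_{(-∞,t]}(x) − P(t) for all x ≠ t. -/
open MeasureTheory Real Filter Set Topology

theorem stein_solution_derivative
    (p : ℝ → ℝ) (hp_pos : ∀ x, 0 < p x) (hp_smooth : ContDiff ℝ 1 p)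
    (hp_int : ∫ x, p x = 1)
    (P : ℝ → ℝ) (hP : ∀ x, P x = ∫ s in Iic x, p s)
    (t : ℝ) (f : ℝ → ℝ)
    (hf : ∀ x, f x = (1 / p x) *
      ∫ s in Iic x, (Set.indicator (Iic t) (fun _ => (1 : ℝ)) s - P t) * p s) :
    ∀ x ≠ t, HasDerivAt f
      (-(deriv p x / p x) * f x + Set.indicator (Iic t) (fun _ => (1 : ℝ)) x - P t) x := by
  have hpc : Continuous p := hp_smooth.continuous
  have hp_integ : Integrable p := by
    by_contra h
    rw [integral_undef h] at hp_int; norm_num at hp_int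
  set c := P t with hc
  set h : ℝ → ℝ := fun s => (Set.indicator (Iic t) (fun _ => (1 : ℝ)) s - c) * p s with hh
  have h_eq : h = fun s => Set.indicator (Iic t) p s - c * p s := by
    funext s
    by_cases hs : s ∈ Iic t <;>
      simp [hh, Set.indicator_of_mem, Set.indicator_of_notMem, hs] <;> ring
  have h_int : Integrable h := by
    rw [h_eq]
    exact (hp_integ.indicator measurableSet_Iic).sub (hp_integ.const_mul c)
  have h_meas : StronglyMeasurable h := by
    rw [h_eq]
    exact ((hpc.stronglyMeasurable.indicator measurableSet_Iic).sub
      (hpc.stronglyMeasurable.const_mul c))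
  intro x hx
  set g : ℝ → ℝ := fun y => ∫ s in Iic y, h s with hg
  have hgx : ∀ y, g y = g x + ∫ s in x..y, h s := by
    intro y
    rw [← intervalIntegral.integral_Iic_sub_Iic h_int.integrableOn h_int.integrableOn]
    ring
  -- continuity of h at x
  have h_cont : ContinuousAt h x := by
    rcases lt_or_gt_of_ne hx with hlt | hgt
    · have hev : h =ᶠ[𝓝 x] fun s => (1 - c) * p s := by
        filter_upwards [Iio_mem_nhds hlt] with s hs
        simp only [hh]
        rw [Set.indicator_of_mem (Set.mem_Iic.mpr (Set.mem_Iio.mp hs).le)]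
      exact ((continuous_const.mul hpc).continuousAt).congr hev.symm
    · have hev : h =ᶠ[𝓝 x] fun s => (0 - c) * p s := by
        filter_upwards [Ioi_mem_nhds hgt] with s hs
        simp only [hh]
        rw [Set.indicator_of_notMem (by simpa using not_le.mpr (Set.mem_Ioi.mp hs))]
      exact ((continuous_const.mul hpc).continuousAt).congr hev.symm
  have hDg : HasDerivAt g (h x) x := by
    have hD0 : HasDerivAt (fun u => ∫ s in x..u, h s) (h x) x :=
      intervalIntegral.integral_hasDerivAt_right (h_int.intervalIntegrable (a := x) (b := x))
        h_meas.stronglyMeasurableAtFilter h_cont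
    exact (hD0.const_add (g x)).congr_of_eventuallyEq (Filter.Eventually.of_forall hgx)
  have hpx : p x ≠ 0 := (hp_pos x).ne'
  have hDp : HasDerivAt p (deriv p x) x :=
    ((hp_smooth.differentiable one_ne_zero) x).hasDerivAt
  have hfeq : f = fun y => g y / p y := by
    funext y; rw [hf y]; ring
  rw [hfeq]
  have hD := hDg.div hDp hpx
  refine hD.congr_deriv ?_
  simp only [hh]
  field_simp
  ring
end

section
/- Let p be a continuously differentiable positive probability density on ℝ with distribution function P satisfying sup_x |p'(x)·min{P(x), 1−P(x)}/p(x)²| = κ < ∞. Then for every t ∈ ℝ, the function f_t(x) = (1/p(x)) ∫_{-∞}^x (1_{(-∞,t]}(s) − P(t)) p(s) ds satisfies sup_{x ≠ t} |(p'(x)/p(x)) f_t(x)| ≤ 2κ and sup_{x ≠ t} |f_t'(x)| ≤ 2κ + 2. -/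
open MeasureTheory Real Filter Set

theorem stein_solution_bounds
    (p : ℝ → ℝ) (hp_pos : ∀ x, 0 < p x) (hp_smooth : ContDiff ℝ 1 p)
    (hp_int : ∫ x, p x = 1)
    (P : ℝ → ℝ) (hP : ∀ x, P x = ∫ s in Iic x, p s)
    (κ : ℝ)
    (hκ : IsLUB {y | ∃ x, y = |deriv p x * min (P x) (1 - P x) / (p x) ^ 2|} κ)
    (t : ℝ) (f : ℝ → ℝ)
    (hf : ∀ x, f x = (1 / p x) *
      ∫ s in Iic x, (Set.indicator (Iic t) (fun _ => (1 : ℝ)) s - P t) * p s) :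
    (∀ x ≠ t, |deriv p x / p x * f x| ≤ 2 * κ) ∧
      (∀ x ≠ t, |deriv f x| ≤ 2 * κ + 2) := by
  have hp_cont : Continuous p := hp_smooth.continuous
  have hp_intg : Integrable p := by
    by_contra h
    rw [integral_undef h] at hp_int
    norm_num at hp_int
  have hP0 : ∀ x, 0 ≤ P x := fun x => by
    rw [hP]
    exact setIntegral_nonneg measurableSet_Iic fun s _ => (hp_pos s).le
  have hP1 : ∀ x, P x ≤ 1 := fun x => by
    rw [hP, ← hp_int]
    exact setIntegral_le_integral hp_intg (ae_of_all _ fun s => (hp_pos s).le)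
  have hPmono : Monotone P := by
    intro a b hab
    rw [hP, hP]
    exact setIntegral_mono_set hp_intg.integrableOn
      (ae_of_all _ fun s => (hp_pos s).le) (HasSubset.Subset.eventuallyLE (Iic_subset_Iic.2 hab))
  -- closed form for the integral
  have hg_eq : (fun s => (Set.indicator (Iic t) (fun _ => (1:ℝ)) s - P t) * p s)
      = fun s => Set.indicator (Iic t) p s - P t * p s := by
    funext s
    by_cases h : s ∈ Iic t <;>
      simp [Set.indicator_of_mem, Set.indicator_of_notMem, h] <;> ring
  have hF : ∀ x, (∫ s in Iic x, (Set.indicator (Iic t) (fun _ => (1:ℝ)) s - P t) * p s)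
      = P (min x t) - P t * P x := by
    intro x
    rw [hg_eq]
    rw [integral_sub ((hp_intg.indicator measurableSet_Iic).integrableOn)
      ((hp_intg.const_mul (P t)).integrableOn)]
    rw [setIntegral_indicator measurableSet_Iic, Set.Iic_inter_Iic,
      integral_const_mul]
    simp only [← hP]
  have hf' : ∀ x, f x = (P (min x t) - P t * P x) / p x := by
    intro x
    rw [hf, hF, one_div, inv_mul_eq_div]
  -- bounds on F
  have hFnn : ∀ x, 0 ≤ P (min x t) - P t * P x := by
    intro x
    rcases le_total x t with h | h
    · rw [min_eq_left h]
      nlinarith [hP0 x, hP1 t]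
    · rw [min_eq_right h]
      nlinarith [hP0 t, hP1 x]
  have hFle : ∀ x, P (min x t) - P t * P x ≤ min (P x) (1 - P x) := by
    intro x
    rcases le_total x t with h | h
    · rw [min_eq_left h]
      refine le_min (by nlinarith [hP0 x, hP0 t]) ?_
      nlinarith [hP1 x, hPmono h, hP1 t, hP0 x]
    · rw [min_eq_right h]
      refine le_min (by nlinarith [hP0 t, hP1 x, hPmono h, hP0 x]) ?_
      nlinarith [hP0 t, hP1 t, hP0 x, hP1 x]
  have key : ∀ x, |deriv p x * (P (min x t) - P t * P x) / p x ^ 2| ≤ κ := by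
    intro x
    refine le_trans ?_ (hκ.1 ⟨x, rfl⟩)
    rw [abs_div, abs_div]
    apply div_le_div_of_nonneg_right ?_ (by positivity)
    rw [abs_mul, abs_mul, abs_of_nonneg (hFnn x),
      abs_of_nonneg (le_min (hP0 x) (by linarith [hP1 x]))]
    exact mul_le_mul_of_nonneg_left (hFle x) (abs_nonneg _)
  have hκ0 : 0 ≤ κ := le_trans (abs_nonneg _) (hκ.1 ⟨t, rfl⟩)
  -- derivative of P
  have hP_deriv : ∀ x, HasDerivAt P (p x) x := by
    intro x
    have h1 : ∀ u, P u = P 0 + ∫ s in (0:ℝ)..u, p s := by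
      intro u
      have := intervalIntegral.integral_Iic_sub_Iic (f := p) (μ := volume)
        hp_intg.integrableOn hp_intg.integrableOn (a := 0) (b := u)
      rw [hP u, hP 0] at *
      linarith
    have h2 : HasDerivAt (fun u => ∫ s in (0:ℝ)..u, p s) (p x) x :=
      intervalIntegral.integral_hasDerivAt_right hp_intg.intervalIntegrable
        (hp_cont.aestronglyMeasurable.stronglyMeasurableAtFilter) hp_cont.continuousAt
    have h3 := h2.const_add (P 0)
    have : (fun u => P 0 + ∫ s in (0:ℝ)..u, p s) = P := funext fun u => (h1 u).symm
    rwa [this] at h3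
  have hp_deriv : ∀ x, HasDerivAt p (deriv p x) x := fun x =>
    ((hp_smooth.differentiable one_ne_zero) x).hasDerivAt
  constructor
  · intro x _
    have heq : deriv p x / p x * f x
        = deriv p x * (P (min x t) - P t * P x) / p x ^ 2 := by
      rw [hf' x]
      field_simp
    rw [heq]
    linarith [key x]
  · intro x hx
    have hderiv : deriv f x = (if x ≤ t then 1 - P t else -P t)
        - deriv p x * (P (min x t) - P t * P x) / p x ^ 2 := by
      rcases lt_or_gt_of_ne hx with h | h
      · -- x < t
        have hN : HasDerivAt (fun u => (1 - P t) * P u) ((1 - P t) * p x) x :=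
          (hP_deriv x).const_mul _
        have hd : HasDerivAt (fun u => (1 - P t) * P u / p u)
            (((1 - P t) * p x * p x - (1 - P t) * P x * deriv p x) / p x ^ 2) x :=
          hN.div (hp_deriv x) (hp_pos x).ne'
        have hev : f =ᶠ[nhds x] (fun u => (1 - P t) * P u / p u) := by
          filter_upwards [Iio_mem_nhds h] with u hu
          rw [hf' u, min_eq_left (le_of_lt hu)]
          congr 1
          ring
        have := (hd.congr_of_eventuallyEq hev).deriv
        have hpx : p x ≠ 0 := (hp_pos x).ne'
        rw [this, if_pos h.le, min_eq_left h.le]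
        field_simp
      · -- x > t
        have hN : HasDerivAt (fun u => P t - P t * P u) (-(P t * p x)) x :=
          ((hP_deriv x).const_mul (P t)).const_sub (P t)
        have hd : HasDerivAt (fun u => (P t - P t * P u) / p u)
            ((-(P t * p x) * p x - (P t - P t * P x) * deriv p x) / p x ^ 2) x :=
          hN.div (hp_deriv x) (hp_pos x).ne'
        have hev : f =ᶠ[nhds x] (fun u => (P t - P t * P u) / p u) := by
          filter_upwards [Ioi_mem_nhds h] with u hu
          rw [hf' u, min_eq_right (le_of_lt hu)]
        have := (hd.congr_of_eventuallyEq hev).deriv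
        have hpx : p x ≠ 0 := (hp_pos x).ne'
        rw [this, if_neg (not_le.mpr h), min_eq_right h.le]
        field_simp
    rw [hderiv]
    have h1 : |(if x ≤ t then 1 - P t else -P t)| ≤ 1 := by
      split <;> rw [abs_le] <;> constructor <;> linarith [hP0 t, hP1 t]
    calc |(if x ≤ t then 1 - P t else -P t)
        - deriv p x * (P (min x t) - P t * P x) / p x ^ 2|
        ≤ |(if x ≤ t then 1 - P t else -P t)|
          + |deriv p x * (P (min x t) - P t * P x) / p x ^ 2| := abs_sub _ _
      _ ≤ 1 + κ := add_le_add h1 (key x)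
      _ ≤ 2 * κ + 2 := by linarith
end

section
/- Let p be a continuously differentiable positive probability density on ℝ satisfying ∫(1+|x|)|p'(x)|dx < ∞. If X is a random variable with density p, then for every t ∈ ℝ, P(t) = E[(p'(X)/p(X))·(t − X)·1{X ≤ t}], where P is the cumulative distribution function of p. -/
open MeasureTheory Real Filter Set Topology

theorem cdf_representation_real_line
    {Ω : Type*} [MeasurableSpace Ω] (ℙ : Measure Ω) [IsProbabilityMeasure ℙ]
    (X : Ω → ℝ) (hX : Measurable X)
    (p : ℝ → ℝ) (hp_pos : ∀ x, 0 < p x) (hp_smooth : ContDiff ℝ 1 p)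
    (hp_int : ∫ x, p x = 1)
    (hC3 : Integrable (fun x => (1 + |x|) * |deriv p x|))
    (hlaw : Measure.map X ℙ = volume.withDensity fun x => ENNReal.ofReal (p x)) :
    ∀ t, (∫ x in Iic t, p x) =
      ∫ ω, deriv p (X ω) / p (X ω) * (t - X ω) *
        Set.indicator (Iic t) (fun _ => (1 : ℝ)) (X ω) ∂ℙ := by
  intro t
  have hp_cont : Continuous p := hp_smooth.continuous
  have hp'_cont : Continuous (deriv p) := hp_smooth.continuous_deriv le_rfl
  have hderiv : ∀ x, HasDerivAt p (deriv p x) x :=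
    fun x => (hp_smooth.differentiable one_ne_zero x).hasDerivAt
  -- integrability of p
  have hp_integrable : Integrable p := by
    by_contra h
    rw [integral_undef h] at hp_int
    norm_num at hp_int
  -- integrability of deriv p
  have hp'_int : Integrable (deriv p) := by
    refine hC3.mono hp'_cont.aestronglyMeasurable (ae_of_all _ fun x => ?_)
    have h1 : (0:ℝ) ≤ |x| := abs_nonneg x
    have h2 := abs_nonneg (deriv p x)
    rw [Real.norm_eq_abs, Real.norm_eq_abs,
      abs_of_nonneg (mul_nonneg (by linarith) h2)]
    nlinarith
  -- p tends to 0 at -∞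
  have hp_lim : Tendsto p atBot (𝓝 0) :=
    tendsto_zero_of_hasDerivAt_of_integrableOn_Iic (a := 0) (fun x _ => hderiv x)
      hp'_int.integrableOn hp_integrable.integrableOn
  -- FTC on Iic
  have hIic : ∀ b, ∫ x in Iic b, deriv p x = p b := by
    intro b
    rw [integral_Iic_of_hasDerivAt_of_tendsto' (fun x _ => hderiv x)
      hp'_int.integrableOn hp_lim, sub_zero]
  -- x * p x tends to 0 at -∞
  have hG : Tendsto (fun b => ∫ x in Iic b, (1 + |x|) * |deriv p x|) atBot (𝓝 0) := by
    have key := intervalIntegral_tendsto_integral_Iic 0 hC3.integrableOn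
      (tendsto_id (x := atBot))
    have heq : ∀ b : ℝ, ∫ x in Iic b, (1 + |x|) * |deriv p x| =
        (∫ x in Iic (0:ℝ), (1 + |x|) * |deriv p x|) -
          ∫ x in b..(0:ℝ), (1 + |x|) * |deriv p x| := by
      intro b
      rw [← intervalIntegral.integral_Iic_sub_Iic hC3.integrableOn hC3.integrableOn]
      ring
    rw [show (0:ℝ) = (∫ x in Iic (0:ℝ), (1 + |x|) * |deriv p x|) -
        (∫ x in Iic (0:ℝ), (1 + |x|) * |deriv p x|) by ring]
    exact Tendsto.congr (fun b => (heq b).symm) (tendsto_const_nhds.sub key)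
  have hxp_lim : Tendsto (fun b => b * p b) atBot (𝓝 0) := by
    apply squeeze_zero_norm' (a := fun b => ∫ x in Iic b, (1 + |x|) * |deriv p x|) _ hG
    filter_upwards [Iic_mem_atBot (0:ℝ)] with b (hb : b ≤ 0)
    have h1 : |b * p b| = |b| * p b := by
      rw [abs_mul, abs_of_pos (hp_pos b)]
    have h2 : p b = ∫ x in Iic b, deriv p x := (hIic b).symm
    calc ‖b * p b‖ = |b| * |∫ x in Iic b, deriv p x| := by
          rw [Real.norm_eq_abs, abs_mul, h2]
      _ ≤ |b| * ∫ x in Iic b, |deriv p x| := by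
          gcongr
          simpa using norm_integral_le_integral_norm (μ := volume.restrict (Iic b))
            (fun x => deriv p x)
      _ = ∫ x in Iic b, |b| * |deriv p x| := by rw [integral_const_mul]
      _ ≤ ∫ x in Iic b, (1 + |x|) * |deriv p x| := by
          apply setIntegral_mono_on
          · exact (hp'_int.abs.const_mul _).integrableOn
          · exact hC3.integrableOn
          · exact measurableSet_Iic
          · intro x hx
            have : |b| ≤ 1 + |x| := by
              rw [mem_Iic] at hx
              rw [abs_of_nonpos hb, abs_of_nonpos (hx.trans hb)]
              linarith
            have := abs_nonneg (deriv p x)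
            nlinarith
  -- limit of p x * (t - x) at -∞
  have h_infty : Tendsto (fun x => p x * (t - x)) atBot (𝓝 0) := by
    have : Tendsto (fun x => p x * t - x * p x) atBot (𝓝 (0 * t - 0)) :=
      (hp_lim.mul_const t).sub hxp_lim
    simpa using this.congr (fun x => by ring)
  -- integrability of deriv p x * (t - x) on Iic t
  have hu'v : IntegrableOn (fun x => deriv p x * (t - x)) (Iic t) := by
    refine Integrable.integrableOn ?_
    refine (hC3.const_mul (1 + |t|)).mono
      ((hp'_cont.mul (by continuity)).aestronglyMeasurable) (ae_of_all _ fun x => ?_)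
    have h1 : |t - x| ≤ |t| + |x| := abs_sub t x
    have h2 : (0:ℝ) ≤ |x| := abs_nonneg x
    have h3 : (0:ℝ) ≤ |t| := abs_nonneg t
    have h4 : (0:ℝ) ≤ |deriv p x| := abs_nonneg _
    rw [Real.norm_eq_abs, Real.norm_eq_abs, abs_mul,
      abs_of_nonneg (show (0:ℝ) ≤ (1 + |t|) * ((1 + |x|) * |deriv p x|) by positivity)]
    nlinarith [mul_le_mul_of_nonneg_left h1 h4, mul_nonneg h2 h3,
      mul_nonneg (mul_nonneg h2 h3) h4]
  -- integration by parts
  have hparts : ∫ x in Iic t, deriv p x * (t - x) = ∫ x in Iic t, p x := by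
    have h_zero : Tendsto (fun x => p x * (t - x)) (𝓝[<] t) (𝓝 0) := by
      have : Tendsto (fun x => p x * (t - x)) (𝓝 t) (𝓝 (p t * (t - t))) :=
        (hp_cont.mul (by continuity)).tendsto t
      simpa using this.mono_left nhdsWithin_le_nhds
    have huv' : IntegrableOn (fun x => p x * (-1 : ℝ)) (Iic t) := by
      simpa using hp_integrable.neg.integrableOn
    have := integral_Iic_mul_deriv_eq_deriv_mul (a := t)
      (u := p) (v := fun x => t - x) (u' := deriv p) (v' := fun _ => (-1:ℝ))
      (fun x _ => hderiv x)
      (fun x _ => by simpa using (hasDerivAt_id x).const_sub t)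
      huv' hu'v h_zero h_infty
    have hL : ∫ x in Iic t, p x * (-1 : ℝ) = -∫ x in Iic t, p x := by
      simp [integral_neg]
    rw [hL] at this
    linarith [this]
  -- change of variables
  set g : ℝ → ℝ := fun x =>
    deriv p x / p x * (t - x) * Set.indicator (Iic t) (fun _ => (1 : ℝ)) x with hg_def
  have hg_meas : Measurable g := by
    apply Measurable.mul
    · exact ((hp'_cont.measurable.div hp_cont.measurable).mul
        (measurable_const.sub measurable_id))
    · exact (measurable_const.indicator measurableSet_Iic)
  have step1 : ∫ ω, g (X ω) ∂ℙ = ∫ x, g x ∂(Measure.map X ℙ) :=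
    (integral_map hX.aemeasurable hg_meas.aestronglyMeasurable).symm
  have step2 : ∫ x, g x ∂(Measure.map X ℙ) = ∫ x, p x * g x := by
    rw [hlaw]
    have hmeas : Measurable (fun x => (p x).toNNReal) :=
      hp_cont.measurable.real_toNNReal
    have : (fun x => ENNReal.ofReal (p x)) = fun x => ((p x).toNNReal : ENNReal) := by
      rfl
    rw [this, integral_withDensity_eq_integral_smul hmeas]
    congr 1
    ext x
    simp [NNReal.smul_def, Real.coe_toNNReal _ (hp_pos x).le]
  have step3 : ∫ x, p x * g x = ∫ x in Iic t, deriv p x * (t - x) := by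
    rw [← integral_indicator measurableSet_Iic]
    congr 1
    ext x
    by_cases hx : x ∈ Iic t
    · simp only [hg_def, indicator_of_mem hx]
      field_simp
      rw [mul_assoc, mul_div_right_comm (p x), div_self (hp_pos x).ne', one_mul]
    · simp [hg_def, indicator_of_notMem hx]
  rw [← hparts, ← step3, ← step2, ← step1]
end

section
/- Let μ ∈ ℝ, σ > 0, and let X be a real random variable with E|X| < ∞ and ℙ(X = μ) = 0. Then X has the Laplace distribution with density p(x) = (1/(2σ))exp(−|x−μ|/σ) if and only if F_X(t) = E[(sign(μ − X)/σ)·(t − X)·1{X ≤ t}] for all t ∈ ℝ. -/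
open MeasureTheory Real Filter Set Topology

namespace LapAux


lemma measurable_realSign : Measurable Real.sign := by
  have : Real.sign = fun r : ℝ => if r < 0 then (-1:ℝ) else if 0 < r then 1 else 0 := by
    funext r; rfl
  rw [this]
  exact Measurable.ite (measurableSet_lt measurable_id measurable_const) measurable_const
    (Measurable.ite (measurableSet_lt measurable_const measurable_id) measurable_const
      measurable_const)

lemma abs_sign_le_one (r : ℝ) : |Real.sign r| ≤ 1 := by
  rcases Real.sign_apply_eq r with h | h | h <;> rw [h] <;> norm_num

lemma integrableOn_exp_mul_Iic {b : ℝ} (hb : 0 < b) (s : ℝ) :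
    IntegrableOn (fun x => Real.exp (b * x)) (Iic s) volume := by
  have m : MeasurableEmbedding fun x : ℝ => -x :=
    (Homeomorph.neg ℝ).isClosedEmbedding.measurableEmbedding
  rw [show (volume : Measure ℝ) = Measure.map (fun x => -x) volume from
    (Measure.map_neg_eq_self volume).symm, m.integrableOn_map_iff]
  have : ((fun x => Real.exp (b * x)) ∘ fun x : ℝ => -x) = fun x => Real.exp (-b * x) := by
    funext x; simp only [Function.comp]; ring_nf
  rw [this, show (fun x : ℝ => -x) ⁻¹' Iic s = Ici (-s) by ext x; simp [neg_le]]
  exact (integrableOn_Ici_iff_integrableOn_Ioi).mpr (exp_neg_integrableOn_Ioi _ hb)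

lemma integral_exp_mul_Iic {b : ℝ} (hb : 0 < b) (s : ℝ) :
    ∫ x in Iic s, Real.exp (b * x) = b⁻¹ * Real.exp (b * s) := by
  have h1 : ∫ x in Iic s, Real.exp (b * x) = ∫ x in Ioi (-s), Real.exp (b * -x) := by
    rw [← integral_comp_neg_Iic]
    congr 1; funext x; ring_nf
  rw [h1]
  have h2 : (fun x : ℝ => Real.exp (b * -x)) = fun x => Real.exp (-(b * x)) := by
    funext x; ring_nf
  rw [h2]
  have h3 := integral_comp_mul_left_Ioi (fun u => Real.exp (-u)) (-s) hb
  rw [h3, integral_exp_neg_Ioi]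
  simp only [smul_eq_mul, mul_neg, neg_neg]



-- copied from aux1 (will merge)

noncomputable def lapCdf (μ σ t : ℝ) : ℝ :=
  if t ≤ μ then Real.exp ((t - μ) / σ) / 2 else 1 - Real.exp (-((t - μ) / σ)) / 2

lemma lapCdf_nonneg {μ σ : ℝ} (hσ : 0 < σ) (t : ℝ) : 0 ≤ lapCdf μ σ t := by
  unfold lapCdf
  split
  · positivity
  · rename_i h
    push_neg at h
    have h2 : Real.exp (-((t - μ)/σ)) ≤ 1 := by
      rw [Real.exp_le_one_iff]
      have : 0 < (t - μ)/σ := div_pos (by linarith) hσ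
      linarith
    linarith

lemma integrableOn_exp_sub_div_Iic {σ : ℝ} (hσ : 0 < σ) (μ s : ℝ) :
    IntegrableOn (fun x => Real.exp ((x - μ) / σ)) (Iic s) volume := by
  have h : (fun x => Real.exp ((x - μ) / σ)) =
      fun x => Real.exp (σ⁻¹ * x) * Real.exp (-(μ / σ)) := by
    funext x
    rw [← Real.exp_add]; congr 1; field_simp; ring
  rw [h]
  exact (integrableOn_exp_mul_Iic (inv_pos.mpr hσ) s).mul_const _

lemma integral_exp_sub_div_Iic {σ : ℝ} (hσ : 0 < σ) (μ s : ℝ) :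
    ∫ x in Iic s, Real.exp ((x - μ) / σ) = σ * Real.exp ((s - μ) / σ) := by
  have h : (fun x => Real.exp ((x - μ) / σ)) =
      fun x => Real.exp (σ⁻¹ * x) * Real.exp (-(μ / σ)) := by
    funext x
    rw [← Real.exp_add]; congr 1; field_simp; ring
  rw [h, integral_mul_const, integral_exp_mul_Iic (inv_pos.mpr hσ) s, inv_inv, mul_assoc,
    ← Real.exp_add]
  congr 2
  field_simp
  ring

lemma integral_exp_neg_sub_div_Ioc {σ : ℝ} (hσ : 0 < σ) {μ t : ℝ} (h : μ ≤ t) :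
    ∫ x in Ioc μ t, Real.exp (-((x - μ) / σ)) = σ * (1 - Real.exp (-((t - μ) / σ))) := by
  rw [← intervalIntegral.integral_of_le h]
  have h1 : ∀ x : ℝ, Real.exp (-((x - μ) / σ)) = Real.exp (-(σ⁻¹ * (x - μ))) := by
    intro x; congr 1; field_simp
  simp_rw [h1]
  have h2 := intervalIntegral.integral_comp_sub_right (fun u => Real.exp (-(σ⁻¹ * u))) μ
    (a := μ) (b := t)
  rw [h2, sub_self]
  have h3 := intervalIntegral.integral_comp_mul_left (c := σ⁻¹)
    (f := fun u => Real.exp (-u)) (a := (0:ℝ)) (b := t - μ) (inv_ne_zero hσ.ne')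
  rw [h3, mul_zero]
  have h4 := intervalIntegral.integral_comp_neg (fun u => Real.exp u) (a := (0:ℝ))
    (b := σ⁻¹ * (t - μ))
  rw [h4, neg_zero, integral_exp]
  rw [smul_eq_mul, inv_inv, Real.exp_zero]


lemma continuous_lapDen {μ σ : ℝ} :
    Continuous fun x : ℝ => 1 / (2 * σ) * Real.exp (-|x - μ| / σ) := by
  fun_prop

lemma integrableOn_lapDen_Iic {μ σ : ℝ} (hσ : 0 < σ) (t : ℝ) :
    IntegrableOn (fun x => 1 / (2 * σ) * Real.exp (-|x - μ| / σ)) (Iic t) volume := by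
  refine Integrable.mono' ((integrableOn_exp_sub_div_Iic hσ μ t).const_mul (1 / (2 * σ)))
    (continuous_lapDen.aestronglyMeasurable.restrict) ?_
  refine ae_of_all _ fun x => ?_
  have h1 : Real.exp (-|x - μ| / σ) ≤ Real.exp ((x - μ) / σ) := by
    apply Real.exp_le_exp.mpr
    exact (div_le_div_iff_of_pos_right hσ).mpr (neg_abs_le _)
  have h2 : (0:ℝ) < 1 / (2 * σ) := by positivity
  have h3 : (0:ℝ) ≤ 1 / (2 * σ) * Real.exp (-|x - μ| / σ) := by positivity
  rw [Real.norm_eq_abs, abs_of_nonneg h3]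
  exact mul_le_mul_of_nonneg_left h1 h2.le

lemma integral_lapDen_Iic {μ σ : ℝ} (hσ : 0 < σ) (t : ℝ) :
    ∫ x in Iic t, 1 / (2 * σ) * Real.exp (-|x - μ| / σ) = lapCdf μ σ t := by
  rcases le_or_gt t μ with h | h
  · have hcg : ∀ x ∈ Iic t, 1 / (2 * σ) * Real.exp (-|x - μ| / σ)
        = 1 / (2 * σ) * Real.exp ((x - μ) / σ) := by
      intro x hx
      congr 2
      rw [abs_of_nonpos (by simp only [mem_Iic] at hx; linarith), neg_neg]
    rw [setIntegral_congr_fun measurableSet_Iic hcg, integral_const_mul,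
      integral_exp_sub_div_Iic hσ μ t, lapCdf, if_pos h]
    field_simp
  · have hsplit : Iic t = Iic μ ∪ Ioc μ t := (Iic_union_Ioc_eq_Iic h.le).symm
    have hint1 := integrableOn_lapDen_Iic (μ := μ) hσ μ
    have hint2 : IntegrableOn (fun x => 1 / (2 * σ) * Real.exp (-|x - μ| / σ)) (Ioc μ t) volume :=
      (integrableOn_lapDen_Iic hσ t).mono_set Ioc_subset_Iic_self
    rw [hsplit, setIntegral_union (Iic_disjoint_Ioc le_rfl) measurableSet_Ioc hint1 hint2]
    have e1 : ∫ x in Iic μ, 1 / (2 * σ) * Real.exp (-|x - μ| / σ) = 1 / 2 := by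
      have hcg : ∀ x ∈ Iic μ, 1 / (2 * σ) * Real.exp (-|x - μ| / σ)
          = 1 / (2 * σ) * Real.exp ((x - μ) / σ) := by
        intro x hx
        congr 2
        rw [abs_of_nonpos (by simp only [mem_Iic] at hx; linarith), neg_neg]
      rw [setIntegral_congr_fun measurableSet_Iic hcg, integral_const_mul,
        integral_exp_sub_div_Iic hσ μ μ]
      field_simp
      ring
      simp
    have e2 : ∫ x in Ioc μ t, 1 / (2 * σ) * Real.exp (-|x - μ| / σ)
        = (1 - Real.exp (-((t - μ) / σ))) / 2 := by
      have hcg : ∀ x ∈ Ioc μ t, 1 / (2 * σ) * Real.exp (-|x - μ| / σ)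
          = 1 / (2 * σ) * Real.exp (-((x - μ) / σ)) := by
        intro x hx
        congr 2
        rw [abs_of_nonneg (by simp only [mem_Ioc] at hx; linarith), neg_div]
      rw [setIntegral_congr_fun measurableSet_Ioc hcg, integral_const_mul,
        integral_exp_neg_sub_div_Ioc hσ h.le]
      field_simp
    rw [e1, e2, lapCdf, if_neg (not_le.mpr h)]
    ring

lemma wd_apply_Iic {μ σ : ℝ} (hσ : 0 < σ) (t : ℝ) :
    (volume.withDensity fun x => ENNReal.ofReal (1 / (2 * σ) * Real.exp (-|x - μ| / σ)))
      (Iic t) = ENNReal.ofReal (lapCdf μ σ t) := by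
  rw [withDensity_apply _ measurableSet_Iic,
    ← ofReal_integral_eq_lintegral_ofReal (integrableOn_lapDen_Iic hσ t)
      (ae_of_all _ fun x => by positivity), integral_lapDen_Iic hσ t]

lemma wd_singleton {μ σ : ℝ} (r : ℝ) :
    (volume.withDensity fun x => ENNReal.ofReal (1 / (2 * σ) * Real.exp (-|x - μ| / σ)))
      {r} = 0 := by
  rw [withDensity_apply _ (measurableSet_singleton r),
    Measure.restrict_eq_zero.mpr (measure_singleton r)]
  simp




/-- The auxiliary function `H`. -/
noncomputable def Haux (ν : Measure ℝ) (μ s : ℝ) : ℝ :=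
  ∫ x, Real.sign (μ - x) * Set.indicator (Iio s) (fun _ => (1 : ℝ)) x ∂ν

lemma key_fubini (ν : Measure ℝ) [IsFiniteMeasure ν] (hint : Integrable (fun x => x) ν)
    (μ t : ℝ) :
    IntegrableOn (Haux ν μ) (Iio t) volume ∧
      (∫ x, Real.sign (μ - x) * max (t - x) 0 ∂ν) = ∫ s in Iio t, Haux ν μ s := by
  classical
  set S : Set (ℝ × ℝ) := {p | p.1 < p.2 ∧ p.2 < t} with hS
  have hSm : MeasurableSet S :=
    (measurableSet_lt measurable_fst measurable_snd).inter
      (measurableSet_lt measurable_snd measurable_const)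
  set φ : ℝ × ℝ → ℝ := fun p => Real.sign (μ - p.1) * S.indicator (fun _ => (1 : ℝ)) p with hφ
  have hφm : Measurable φ :=
    (measurable_realSign.comp (measurable_const.sub measurable_fst)).mul
      (measurable_const.indicator hSm)
  -- sections in the second variable
  have hsec : ∀ x s : ℝ, φ (x, s) = Real.sign (μ - x) * (Ioo x t).indicator (fun _ => (1:ℝ)) s := by
    intro x s
    simp only [hφ, Set.indicator_apply, hS, mem_setOf_eq, mem_Ioo]
  have hInt1 : ∀ x : ℝ, Integrable (fun s => φ (x, s)) volume := by
    intro x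
    simp only [hsec]
    exact (((integrable_indicator_iff measurableSet_Ioo).mpr
      (integrableOn_const measure_Ioo_lt_top.ne)).const_mul _)
  have hnorm : ∀ x : ℝ, (∫ s, ‖φ (x, s)‖) = |Real.sign (μ - x)| * max (t - x) 0 := by
    intro x
    have : (fun s => ‖φ (x, s)‖)
        = fun s => |Real.sign (μ - x)| * (Ioo x t).indicator (fun _ => (1:ℝ)) s := by
      funext s
      rw [hsec, Real.norm_eq_abs, abs_mul, abs_of_nonneg (Set.indicator_nonneg (by simp) s)]
    rw [this, integral_const_mul, integral_indicator_const _ measurableSet_Ioo]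
    simp [Real.volume_Ioo, ENNReal.toReal_ofReal']
  have hIntφ : Integrable φ (ν.prod volume) := by
    refine (integrable_prod_iff hφm.aestronglyMeasurable).mpr ⟨ae_of_all _ hInt1, ?_⟩
    have : (fun x => ∫ s, ‖φ (x, s)‖) = fun x => |Real.sign (μ - x)| * max (t - x) 0 := by
      funext x; exact hnorm x
    rw [this]
    refine Integrable.mono' ((integrable_const |t|).add hint.norm) ?_ (ae_of_all _ fun x => ?_)
    · exact ((measurable_realSign.comp (measurable_const.sub measurable_id)).abs.mul
        ((measurable_const.sub measurable_id).max measurable_const)).aestronglyMeasurable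
    · have h1 : |Real.sign (μ - x)| * max (t - x) 0 ≤ 1 * max (t - x) 0 :=
        mul_le_mul_of_nonneg_right (abs_sign_le_one _) (le_max_right _ _)
      have h2 : max (t - x) 0 ≤ |t| + |x| := by
        rcases max_cases (t - x) 0 with ⟨h, _⟩ | ⟨h, _⟩ <;> rw [h]
        · calc t - x ≤ |t - x| := le_abs_self _
            _ ≤ |t| + |x| := abs_sub _ _
        · positivity
      have h3 : (0:ℝ) ≤ max (t - x) 0 := le_max_right _ _
      simp only [Pi.add_apply, Real.norm_eq_abs]
      have h0 : (0:ℝ) ≤ |Real.sign (μ - x)| * max (t - x) 0 := mul_nonneg (abs_nonneg _) h3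
      rw [abs_of_nonneg h0]
      calc |Real.sign (μ - x)| * max (t - x) 0 ≤ max (t - x) 0 := by linarith
        _ ≤ |t| + |x| := h2
  -- swap
  have hswap := integral_integral_swap (f := fun x s => φ (x, s)) (μ := ν) (ν := volume) hIntφ
  -- inner integral over s
  have hinner : ∀ x : ℝ, (∫ s, φ (x, s)) = Real.sign (μ - x) * max (t - x) 0 := by
    intro x
    simp only [hsec]
    rw [integral_const_mul, integral_indicator_const _ measurableSet_Ioo]
    simp [Real.volume_Ioo, ENNReal.toReal_ofReal']
  -- inner integral over x
  have hinner2 : ∀ s : ℝ, (∫ x, φ (x, s) ∂ν) = (Iio t).indicator (Haux ν μ) s := by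
    intro s
    by_cases hs : s < t
    · have : (fun x => φ (x, s))
          = fun x => Real.sign (μ - x) * (Iio s).indicator (fun _ => (1:ℝ)) x := by
        funext x
        simp only [hφ, Set.indicator_apply, hS, mem_setOf_eq, mem_Iio]
        by_cases hx : x < s
        · rw [if_pos ⟨hx, hs⟩, if_pos hx]
        · rw [if_neg (fun h => hx h.1), if_neg hx]
      rw [this, Set.indicator_of_mem (mem_Iio.mpr hs)]
      rfl
    · have : (fun x => φ (x, s)) = fun _ => (0:ℝ) := by
        funext x
        simp only [hφ, Set.indicator_apply, hS, mem_setOf_eq]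
        rw [if_neg (fun h => hs h.2), mul_zero]
      rw [this, integral_zero, Set.indicator_of_notMem (by simpa using hs)]
  constructor
  · have hIH : Integrable (fun s => ∫ x, φ (x, s) ∂ν) volume := hIntφ.integral_prod_right
    have : Integrable ((Iio t).indicator (Haux ν μ)) volume := by
      have heq : (fun s => ∫ x, φ (x, s) ∂ν) = (Iio t).indicator (Haux ν μ) := funext hinner2
      rwa [heq] at hIH
    exact (integrable_indicator_iff measurableSet_Iio).mp this
  · calc (∫ x, Real.sign (μ - x) * max (t - x) 0 ∂ν)
        = ∫ x, (∫ s, φ (x, s)) ∂ν := by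
          congr 1; funext x; rw [hinner]
      _ = ∫ s, (∫ x, φ (x, s) ∂ν) := hswap
      _ = ∫ s, (Iio t).indicator (Haux ν μ) s := by congr 1; funext s; rw [hinner2]
      _ = ∫ s in Iio t, Haux ν μ s := integral_indicator measurableSet_Iio




lemma Haux_left (ν : Measure ℝ) [IsFiniteMeasure ν] {μ s : ℝ} (hs : s ≤ μ) :
    Haux ν μ s = (ν (Iio s)).toReal := by
  unfold Haux
  have h : (fun x => Real.sign (μ - x) * (Iio s).indicator (fun _ => (1:ℝ)) x)
      = (Iio s).indicator (fun _ => (1:ℝ)) := by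
    funext x
    by_cases hx : x < s
    · simp [Set.indicator_apply, hx, Real.sign_of_pos (show (0:ℝ) < μ - x by linarith)]
    · simp [Set.indicator_apply, hx]
  rw [h, integral_indicator_const _ measurableSet_Iio]
  simp
  rfl

lemma Haux_right (ν : Measure ℝ) [IsFiniteMeasure ν] {μ s : ℝ} (hatom : ν {μ} = 0)
    (hs : μ < s) :
    Haux ν μ s = 2 * (ν (Iic μ)).toReal - (ν (Iio s)).toReal := by
  unfold Haux
  have h : (fun x => Real.sign (μ - x) * (Iio s).indicator (fun _ => (1:ℝ)) x)
      = fun x => (Iio μ).indicator (fun _ => (1:ℝ)) x - (Ioo μ s).indicator (fun _ => (1:ℝ)) x := by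
    funext x
    simp only [Set.indicator_apply, mem_Iio, mem_Ioo]
    rcases lt_trichotomy x μ with hx | hx | hx
    · have h1 : x < s := hx.trans hs
      have h2 : ¬(μ < x ∧ x < s) := fun h => absurd h.1 (asymm hx)
      simp [h1, hx, h2, asymm hx, Real.sign_of_pos (show (0:ℝ) < μ - x by linarith)]
    · subst hx
      simp [hs, lt_irrefl]
    · have h2 : ¬ x < μ := not_lt.mpr hx.le
      have h3 : Real.sign (μ - x) = -1 := Real.sign_of_neg (by linarith)
      by_cases hxs : x < s
      · simp [hx, hxs, h2, h3]
      · simp [hxs, h2, h3]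
  rw [h, integral_sub ((integrable_const (1:ℝ)).indicator measurableSet_Iio)
      ((integrable_const (1:ℝ)).indicator measurableSet_Ioo),
    integral_indicator_const _ measurableSet_Iio, integral_indicator_const _ measurableSet_Ioo]
  have hIioμ : ν (Iio μ) = ν (Iic μ) := measure_congr (Iio_ae_eq_Iic' hatom)
  have hsplit : ν (Iio s) = ν (Iic μ) + ν (Ioo μ s) := by
    rw [← Iic_union_Ioo_eq_Iio hs]
    exact measure_union ((Iic_disjoint_Ioc le_rfl).mono_right Ioo_subset_Ioc_self)
      measurableSet_Ioo
  have h1 : (ν (Iio s)).toReal = (ν (Iic μ)).toReal + (ν (Ioo μ s)).toReal := by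
    rw [hsplit, ENNReal.toReal_add (measure_ne_top _ _) (measure_ne_top _ _)]
  show (ν (Iio μ)).toReal • (1:ℝ) - (ν (Ioo μ s)).toReal • (1:ℝ) = _
  rw [hIioμ]
  simp only [smul_eq_mul, mul_one]
  linarith

lemma Iio_toReal_ae_eq_Iic (ν : Measure ℝ) [IsFiniteMeasure ν] :
    ∀ᵐ s : ℝ, (ν (Iio s)).toReal = (ν (Iic s)).toReal := by
  have hc : Set.Countable {s : ℝ | 0 < ν {s}} := by
    apply Measure.countable_meas_pos_of_disjoint_of_meas_iUnion_ne_top ν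
      (fun s : ℝ => measurableSet_singleton s)
      (fun i j hij => by simp [Function.onFun, Set.disjoint_singleton, hij])
    exact ne_of_lt (lt_of_le_of_lt (measure_mono (subset_univ _)) (measure_lt_top ν univ))
  have hsub : {s : ℝ | ¬ (ν (Iio s)).toReal = (ν (Iic s)).toReal} ⊆ {s : ℝ | 0 < ν {s}} := by
    intro s hs
    simp only [mem_setOf_eq] at hs ⊢
    by_contra h
    push_neg at h
    have h0 : ν {s} = 0 := le_antisymm h zero_le
    exact hs (by rw [measure_congr (Iio_ae_eq_Iic' h0)])
  have : volume {s : ℝ | ¬ (ν (Iio s)).toReal = (ν (Iic s)).toReal} = 0 :=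
    measure_mono_null hsub (Set.Countable.measure_zero hc _)
  exact this

lemma ode_exp {g : ℝ → ℝ} {a b c k : ℝ} (hab : a ≤ b)
    (hcont : ContinuousOn g (Icc a b))
    (heq : ∀ t ∈ Icc a b, g t = c + k * ∫ s in a..t, g s) :
    ∀ t ∈ Icc a b, g t = c * Real.exp (k * (t - a)) := by
  set G : ℝ → ℝ := fun t => ∫ s in a..t, g s with hG
  have hGint : ∀ x ∈ Icc a b, IntervalIntegrable g volume a x := by
    intro x hx
    apply ContinuousOn.intervalIntegrable
    rw [uIcc_of_le hx.1]
    exact hcont.mono (Icc_subset_Icc le_rfl hx.2)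
  have hGcont : ContinuousOn G (Icc a b) := by
    have := intervalIntegral.continuousOn_primitive_interval
      (a := a) (b := b) (μ := volume) (f := g)
      (by rw [uIcc_of_le hab]; exact (hcont.mono (by simp)).integrableOn_compact isCompact_Icc)
    rwa [uIcc_of_le hab] at this
  set φ : ℝ → ℝ := fun t => Real.exp (-(k * t)) * (c + k * G t) with hφ
  have hφcont : ContinuousOn φ (Icc a b) :=
    (Real.continuous_exp.comp (continuous_const.mul continuous_id).neg).continuousOn.mul
      (continuousOn_const.add (continuousOn_const.mul hGcont))
  have hφderiv : ∀ x ∈ Ico a b, HasDerivWithinAt φ 0 (Ici x) x := by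
    intro x hx
    have hxIcc : x ∈ Icc a b := ⟨hx.1, hx.2.le⟩
    have hmeas : StronglyMeasurableAtFilter g (nhdsWithin x (Ioi x)) volume :=
      ⟨Icc a b, Icc_mem_nhdsGT_of_mem hx, (hcont.aestronglyMeasurable measurableSet_Icc)⟩
    have hgc : ContinuousWithinAt g (Ioi x) x :=
      (hcont x hxIcc).mono_of_mem_nhdsWithin (Icc_mem_nhdsGT_of_mem hx)
    have hGd : HasDerivWithinAt G (g x) (Ici x) x :=
      intervalIntegral.integral_hasDerivWithinAt_right (hGint x hxIcc) hmeas hgc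
    have h1 : HasDerivWithinAt (fun u => Real.exp (-(k * u)))
        (Real.exp (-(k * x)) * (-k)) (Ici x) x := by
      have := ((hasDerivAt_id x).const_mul k).neg.exp
      simpa using this.hasDerivWithinAt
    have h2 : HasDerivWithinAt (fun u => c + k * G u) (k * g x) (Ici x) x :=
      ((hGd.const_mul k).const_add c)
    have hmul := h1.mul h2
    have hgx : g x = c + k * G x := heq x hxIcc
    have : Real.exp (-(k * x)) * (-k) * (c + k * G x) + Real.exp (-(k * x)) * (k * g x) = 0 := by
      rw [hgx]; ring
    rwa [this] at hmul
  have hconst := constant_of_has_deriv_right_zero hφcont hφderiv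
  intro t ht
  have hφt := hconst t ht
  have hφa : φ a = Real.exp (-(k * a)) * c := by
    simp only [hφ, hG, intervalIntegral.integral_same, mul_zero, add_zero]
  rw [hφa] at hφt
  have hgt : g t = c + k * G t := heq t ht
  have hexp : Real.exp (-(k * t)) ≠ 0 := Real.exp_ne_zero _
  have hkey : Real.exp (-(k * t)) * g t = Real.exp (-(k * a)) * c := by
    rw [hgt]; exact hφt
  have h5 : g t = Real.exp (k * t) * (Real.exp (-(k * t)) * g t) := by
    rw [← mul_assoc, ← Real.exp_add, add_neg_cancel, Real.exp_zero, one_mul]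
  rw [h5, hkey, ← mul_assoc, ← Real.exp_add,
    show k * t + -(k * a) = k * (t - a) by ring]
  ring


end LapAux

open LapAux


theorem laplace_fixed_point_characterization
    {Ω : Type*} [MeasurableSpace Ω] (ℙ : Measure Ω) [IsProbabilityMeasure ℙ]
    (X : Ω → ℝ) (hX : Measurable X)
    (μ σ : ℝ) (hσ : 0 < σ)
    (hXint : Integrable X ℙ)
    (hatom : ℙ {ω | X ω = μ} = 0) :
    Measure.map X ℙ = volume.withDensity
        (fun x => ENNReal.ofReal ((1 / (2 * σ)) * Real.exp (-|x - μ| / σ))) ↔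
      ∀ t : ℝ, (ℙ {ω | X ω ≤ t}).toReal =
        ∫ ω, Real.sign (μ - X ω) / σ * (t - X ω) *
          Set.indicator (Iic t) (fun _ => (1 : ℝ)) (X ω) ∂ℙ := by
  classical
  set ν : Measure ℝ := Measure.map X ℙ with hν
  haveI hνprob : IsProbabilityMeasure ν := Measure.isProbabilityMeasure_map hX.aemeasurable
  have hintν : Integrable (fun x : ℝ => x) ν := by
    rw [hν]
    exact (integrable_map_measure aestronglyMeasurable_id hX.aemeasurable).mpr hXint
  have hatomν : ν {μ} = 0 := by
    rw [hν, Measure.map_apply hX (measurableSet_singleton μ)]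
    convert hatom using 2
    rfl
  have hP : ∀ t : ℝ, ℙ {ω | X ω ≤ t} = ν (Iic t) := by
    intro t
    rw [hν, Measure.map_apply hX measurableSet_Iic]
    rfl
  have hRHS : ∀ t : ℝ, (∫ ω, Real.sign (μ - X ω) / σ * (t - X ω) *
        Set.indicator (Iic t) (fun _ => (1:ℝ)) (X ω) ∂ℙ)
      = (1/σ) * ∫ s in Iio t, Haux ν μ s := by
    intro t
    have hmeas : AEStronglyMeasurable (fun x : ℝ => Real.sign (μ - x) / σ * (t - x) *
        Set.indicator (Iic t) (fun _ => (1:ℝ)) x) ν := by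
      apply Measurable.aestronglyMeasurable
      exact (((measurable_realSign.comp (measurable_const.sub measurable_id)).div_const σ).mul
        (measurable_const.sub measurable_id)).mul
        (measurable_const.indicator measurableSet_Iic)
    rw [hν, ← integral_map hX.aemeasurable hmeas]
    have hfeq : ∀ x : ℝ, Real.sign (μ - x) / σ * (t - x) *
        Set.indicator (Iic t) (fun _ => (1:ℝ)) x
        = (1/σ) * (Real.sign (μ - x) * max (t - x) 0) := by
      intro x
      by_cases hx : x ≤ t
      · rw [Set.indicator_of_mem (mem_Iic.mpr hx), max_eq_left (by linarith)]
        ring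
      · rw [Set.indicator_of_notMem (by simpa using hx),
          max_eq_right (by push_neg at hx; linarith)]
        ring
    simp_rw [hfeq]
    rw [integral_const_mul, (key_fubini (Measure.map X ℙ) (hν ▸ hintν) μ t).2]
  constructor
  · intro h t
    rw [hP t, hRHS t]
    have hIic : ∀ r : ℝ, ν (Iic r) = ENNReal.ofReal (lapCdf μ σ r) := fun r => by
      rw [h]; exact wd_apply_Iic hσ r
    have hsing : ∀ r : ℝ, ν {r} = 0 := fun r => by
      rw [h]; exact wd_singleton r
    have hIio : ∀ r : ℝ, ν (Iio r) = ENNReal.ofReal (lapCdf μ σ r) := fun r => by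
      rw [measure_congr (Iio_ae_eq_Iic' (hsing r))]; exact hIic r
    have hF : ∀ r : ℝ, (ν (Iic r)).toReal = lapCdf μ σ r := fun r => by
      rw [hIic r, ENNReal.toReal_ofReal (lapCdf_nonneg hσ r)]
    have hF' : ∀ r : ℝ, (ν (Iio r)).toReal = lapCdf μ σ r := fun r => by
      rw [hIio r, ENNReal.toReal_ofReal (lapCdf_nonneg hσ r)]
    have hHl : ∀ s : ℝ, s ≤ μ → Haux ν μ s = Real.exp ((s - μ)/σ) / 2 := fun s hs => by
      rw [Haux_left ν hs, hF' s, lapCdf, if_pos hs]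
    have hlapμ : lapCdf μ σ μ = 1/2 := by
      rw [lapCdf, if_pos le_rfl, sub_self, zero_div, Real.exp_zero]
    have hHr : ∀ s : ℝ, μ < s → Haux ν μ s = Real.exp (-((s - μ)/σ)) / 2 := fun s hs => by
      rw [Haux_right ν (hsing μ) hs, hF' s, hF μ, hlapμ, lapCdf, if_neg (not_le.mpr hs)]
      ring
    rw [hF t]
    rcases le_or_gt t μ with h1 | h1
    · have hcong : ∀ s ∈ Iio t, Haux ν μ s = Real.exp ((s - μ)/σ) / 2 :=
        fun s hs => hHl s (le_of_lt (lt_of_lt_of_le hs h1))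
      rw [setIntegral_congr_fun measurableSet_Iio hcong,
        setIntegral_congr_set Iio_ae_eq_Iic, integral_div,
        integral_exp_sub_div_Iic hσ μ t, lapCdf, if_pos h1]
      field_simp
    · have hIOn := (key_fubini ν hintν μ t).1
      have hsplitset : Iio t = Iic μ ∪ Ioo μ t := (Iic_union_Ioo_eq_Iio h1).symm
      rw [hsplitset, setIntegral_union
        ((Iic_disjoint_Ioc le_rfl).mono_right Ioo_subset_Ioc_self) measurableSet_Ioo
        (hIOn.mono_set (by rw [hsplitset]; exact subset_union_left))
        (hIOn.mono_set (by rw [hsplitset]; exact subset_union_right))]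
      have e1 : ∫ s in Iic μ, Haux ν μ s = σ / 2 := by
        rw [setIntegral_congr_fun measurableSet_Iic (fun s hs => hHl s hs),
          integral_div, integral_exp_sub_div_Iic hσ μ μ, sub_self, zero_div,
          Real.exp_zero, mul_one]
      have e2 : ∫ s in Ioo μ t, Haux ν μ s = σ * (1 - Real.exp (-((t - μ)/σ))) / 2 := by
        rw [setIntegral_congr_fun measurableSet_Ioo (fun s hs => hHr s hs.1),
          setIntegral_congr_set Ioo_ae_eq_Ioc, integral_div,
          integral_exp_neg_sub_div_Ioc hσ h1.le]
      rw [e1, e2, lapCdf, if_neg (not_le.mpr h1)]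
      field_simp
      ring
  · intro hfix
    have heq : ∀ t : ℝ, (ν (Iic t)).toReal = (1/σ) * ∫ s in Iio t, Haux ν μ s := fun t => by
      rw [← hP t, hfix t, hRHS t]
    set F : ℝ → ℝ := fun t => (ν (Iic t)).toReal with hFdef
    have hIOn : ∀ t : ℝ, IntegrableOn (Haux ν μ) (Iio t) volume :=
      fun t => (key_fubini ν hintν μ t).1
    have hHaeF : ∀ᵐ s : ℝ, (ν (Iio s)).toReal = F s := Iio_toReal_ae_eq_Iic ν
    have hsplit : ∀ a t : ℝ, a ≤ t →
        ∫ s in Iio t, Haux ν μ s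
          = (∫ s in Iio a, Haux ν μ s) + ∫ s in a..t, Haux ν μ s := by
      intro a t hat
      have hu : ∫ s in Iio t, Haux ν μ s
          = (∫ s in Iio a, Haux ν μ s) + ∫ s in Ico a t, Haux ν μ s := by
        rw [← Iio_union_Ico_eq_Iio hat]
        exact setIntegral_union ((Iio_disjoint_Ici (le_refl a)).mono_right Ico_subset_Ici_self)
          measurableSet_Ico
          ((hIOn t).mono_set (fun x hx => lt_of_lt_of_le hx hat))
          ((hIOn t).mono_set (fun x hx => hx.2))
      rw [hu, intervalIntegral.integral_of_le hat]
      congr 1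
      exact setIntegral_congr_set Ico_ae_eq_Ioc
    have hFeq : ∀ a t : ℝ, a ≤ t → F t = F a + (1/σ) * ∫ s in a..t, Haux ν μ s := by
      intro a t hat
      show (ν (Iic t)).toReal = _
      rw [heq t, hsplit a t hat, mul_add, ← heq a]
    have hFcont : ∀ a b : ℝ, a ≤ b → ContinuousOn F (Icc a b) := by
      intro a b hab
      have hprim : ContinuousOn (fun t => ∫ s in a..t, Haux ν μ s) (Icc a b) := by
        have := intervalIntegral.continuousOn_primitive_interval
          (a := a) (b := b) (μ := volume) (f := Haux ν μ)
          (by rw [uIcc_of_le hab]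
              exact (hIOn (b+1)).mono_set (fun x hx => lt_of_le_of_lt hx.2 (by linarith)))
        rwa [uIcc_of_le hab] at this
      exact (continuousOn_const.add (continuousOn_const.mul hprim)).congr
        (fun t ht => hFeq a t ht.1)
    have hintHF : ∀ a t : ℝ, a ≤ t → t ≤ μ →
        ∫ s in a..t, Haux ν μ s = ∫ s in a..t, F s := by
      intro a t hat htμ
      have h1 : ∫ s in a..t, Haux ν μ s = ∫ s in a..t, (ν (Iio s)).toReal := by
        apply intervalIntegral.integral_congr
        intro s hs
        rw [uIcc_of_le hat] at hs
        exact Haux_left ν (le_trans hs.2 htμ)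
      rw [h1]
      exact intervalIntegral.integral_congr_ae
        (by filter_upwards [hHaeF] with s h _ using h)
    have hFleft : ∀ a : ℝ, a ≤ μ → F a = F μ * Real.exp ((a - μ)/σ) := by
      intro a ha
      have hode := ode_exp (g := F) (a := a) (b := μ) (c := F a) (k := 1/σ) ha
        (hFcont a μ ha)
        (fun t ht => by rw [hFeq a t ht.1, hintHF a t ht.1 ht.2])
      have hμ := hode μ (right_mem_Icc.mpr ha)
      calc F a = F a * (Real.exp ((1/σ) * (μ - a)) * Real.exp ((a - μ)/σ)) := by
            rw [← Real.exp_add, show (1/σ) * (μ - a) + (a - μ)/σ = 0 by field_simp; ring,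
              Real.exp_zero, mul_one]
        _ = F μ * Real.exp ((a - μ)/σ) := by rw [← mul_assoc, ← hμ]
    have hFright : ∀ t : ℝ, μ ≤ t → F t = 2 * F μ - F μ * Real.exp (-((t - μ)/σ)) := by
      intro b hb
      have heq2 : ∀ t ∈ Icc μ b, (2 * F μ - F t)
          = F μ + (-(1/σ)) * ∫ s in μ..t, (2 * F μ - F s) := by
        intro t ht
        have h1 : ∫ s in μ..t, Haux ν μ s
            = ∫ s in μ..t, (2 * (ν (Iic μ)).toReal - (ν (Iio s)).toReal) := by
          apply intervalIntegral.integral_congr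
          intro s hs
          rw [uIcc_of_le ht.1] at hs
          rcases eq_or_lt_of_le hs.1 with hsμ | hsμ
          · rw [← hsμ, Haux_left ν le_rfl]
            have h4 : (ν (Iio μ)).toReal = (ν (Iic μ)).toReal := by
              rw [measure_congr (Iio_ae_eq_Iic' hatomν)]
            show _ = 2 * (ν (Iic μ)).toReal - (ν (Iio μ)).toReal
            linarith
          · exact Haux_right ν hatomν hsμ
        have h2 : ∫ s in μ..t, (2 * (ν (Iic μ)).toReal - (ν (Iio s)).toReal)
            = ∫ s in μ..t, (2 * F μ - F s) :=
          intervalIntegral.integral_congr_ae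
            (by filter_upwards [hHaeF] with s h _ using by rw [h])
        have h3 := hFeq μ t ht.1
        rw [h1, h2] at h3
        rw [h3]
        ring
      have hcont2 : ContinuousOn (fun t => 2 * F μ - F t) (Icc μ b) :=
        continuousOn_const.sub (hFcont μ b hb)
      have hode := ode_exp (g := fun t => 2 * F μ - F t) (a := μ) (b := b)
        (c := F μ) (k := -(1/σ)) hb hcont2 heq2
      have hbb := hode b (right_mem_Icc.mpr hb)
      have : F μ * Real.exp (-(1/σ) * (b - μ)) = F μ * Real.exp (-((b - μ)/σ)) := by
        congr 2
        ring
      rw [this] at hbb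
      linarith
    have hlim1 : Tendsto F atTop (𝓝 1) := by
      have h1 := tendsto_measure_Iic_atTop (α := ℝ) ν
      have h2 := (ENNReal.tendsto_toReal (measure_ne_top ν univ)).comp h1
      simp only [measure_univ, ENNReal.toReal_one] at h2
      exact h2
    have hlim2 : Tendsto F atTop (𝓝 (2 * F μ)) := by
      have hexp : Tendsto (fun t : ℝ => Real.exp (-((t - μ)/σ))) atTop (𝓝 0) := by
        apply Real.tendsto_exp_atBot.comp
        exact tendsto_neg_atTop_atBot.comp
          ((tendsto_atTop_add_const_right _ (-μ) tendsto_id).atTop_div_const hσ)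
      have h3 : Tendsto (fun t : ℝ => 2 * F μ - F μ * Real.exp (-((t - μ)/σ))) atTop
          (𝓝 (2 * F μ - F μ * 0)) := tendsto_const_nhds.sub (tendsto_const_nhds.mul hexp)
      rw [mul_zero, sub_zero] at h3
      apply h3.congr'
      filter_upwards [eventually_ge_atTop μ] with t ht
      exact (hFright t ht).symm
    have hFμ : F μ = 1/2 := by
      have := tendsto_nhds_unique hlim2 hlim1
      linarith
    apply Measure.ext_of_Iic ν
    intro r
    rw [wd_apply_Iic hσ r, ← ENNReal.ofReal_toReal (measure_ne_top ν (Iic r))]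
    congr 1
    show F r = lapCdf μ σ r
    rcases le_or_gt r μ with hr | hr
    · rw [hFleft r hr, hFμ, lapCdf, if_pos hr]
      ring
    · rw [hFright r hr.le, hFμ, lapCdf, if_neg (not_le.mpr hr)]
      ring
end

section
/- Let p be a positive, continuously differentiable probability density on (0,∞) satisfying ∫_0^∞ x|p'(x)|dx < ∞, P(x)/p(x) → 0 as x → 0⁺, (1−P(x))/p(x) → 0 as x → ∞, and sup_{x>0}|p'(x)·min{P(x),1−P(x)}/p(x)²| < ∞. Let X be a positive random variable with E|(p'(X)/p(X))·X| < ∞. Then X has density p if and only if F_X(t) = E[−(p'(X)/p(X))·min{X, t}] for all t > 0. -/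
open MeasureTheory Real Filter Set Topology
open scoped NNReal ENNReal

lemma paxis_meas_p {p : ℝ → ℝ} (hp_smooth : ContDiffOn ℝ 1 p (Ioi 0))
    (hp_zero : ∀ x ≤ 0, p x = 0) : Measurable p := by
  classical
  have h : p = (Ioi (0:ℝ)).piecewise p (fun _ => 0) := by
    funext x
    by_cases hx : x ∈ Ioi (0:ℝ)
    · simp [hx]
    · simp only [Set.piecewise, hx, if_false]
      exact hp_zero x (by simpa using hx)
  rw [h]
  exact ContinuousOn.measurable_piecewise hp_smooth.continuousOn
    continuousOn_const measurableSet_Ioi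

lemma paxis_integrableOn_p {p : ℝ → ℝ} (hp_int : ∫ x in Ioi (0 : ℝ), p x = 1) :
    IntegrableOn p (Ioi 0) volume := by
  by_contra h
  rw [integral_undef h] at hp_int
  norm_num at hp_int

lemma paxis_int_deriv {p : ℝ → ℝ}
    (hC3 : IntegrableOn (fun x => x * |deriv p x|) (Ioi 0)) {s : ℝ} (hs : 0 < s) :
    IntegrableOn (deriv p) (Ioi s) volume := by
  have h1 : IntegrableOn (fun x => x * |deriv p x|) (Ioi s) volume :=
    hC3.mono_set (Ioi_subset_Ioi hs.le)
  refine Integrable.mono' (h1.const_mul (1/s)) (measurable_deriv p).aestronglyMeasurable.restrict ?_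
  filter_upwards [ae_restrict_mem measurableSet_Ioi] with x hx
  have hx' : s < x := hx
  rw [Real.norm_eq_abs, div_mul_eq_mul_div, le_div_iff₀ hs, mul_comm, one_mul]
  exact mul_le_mul_of_nonneg_right hx'.le (abs_nonneg _)

lemma paxis_integral_deriv {p : ℝ → ℝ} (hp_pos : ∀ x > 0, 0 < p x)
    (hp_smooth : ContDiffOn ℝ 1 p (Ioi 0))
    (hp_int : ∫ x in Ioi (0 : ℝ), p x = 1)
    (hC3 : IntegrableOn (fun x => x * |deriv p x|) (Ioi 0)) {s : ℝ} (hs : 0 < s) :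
    ∫ x in Ioi s, deriv p x = - p s := by
  have hderiv : ∀ x ∈ Ioi (0:ℝ), HasDerivAt p (deriv p x) x := fun x hx =>
    ((hp_smooth.differentiableOn one_ne_zero).differentiableAt (isOpen_Ioi.mem_nhds hx)).hasDerivAt
  have hInt : IntegrableOn (deriv p) (Ioi s) volume := paxis_int_deriv hC3 hs
  have key : ∀ b, s ≤ b → ∫ x in s..b, deriv p x = p b - p s := by
    intro b hb
    apply intervalIntegral.integral_eq_sub_of_hasDerivAt
    · intro x hx
      apply hderiv
      rw [uIcc_of_le hb] at hx
      exact lt_of_lt_of_le hs hx.1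
    · rw [intervalIntegrable_iff_integrableOn_Ioc_of_le hb]
      exact hInt.mono_set Ioc_subset_Ioi_self
  have t1 : Tendsto (fun b => ∫ x in s..b, deriv p x) atTop
      (𝓝 (∫ x in Ioi s, deriv p x)) :=
    intervalIntegral_tendsto_integral_Ioi s hInt tendsto_id
  set I := ∫ x in Ioi s, deriv p x with hI
  have t2 : Tendsto (fun b => p b - p s) atTop (𝓝 I) := by
    apply t1.congr'
    filter_upwards [eventually_ge_atTop s] with b hb
    exact key b hb
  have t3 : Tendsto p atTop (𝓝 (I + p s)) := by
    have := t2.add_const (p s)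
    simpa using this
  have hL : I + p s = 0 := by
    by_contra hne
    rcases lt_or_gt_of_ne hne with hneg | hpos
    · have hev : ∀ᶠ b in atTop, p b < 0 := t3.eventually (eventually_lt_nhds hneg)
      rcases ((hev.and (eventually_gt_atTop 0)).exists) with ⟨b, hb1, hb2⟩
      exact absurd (hp_pos b hb2) (not_lt.2 hb1.le)
    · set L := I + p s with hLdef
      have hev : ∀ᶠ b in atTop, L/2 ≤ p b :=
        t3.eventually (eventually_ge_nhds (by linarith : L/2 < L))
      rcases eventually_atTop.1 hev with ⟨B, hB⟩
      have hpi : IntegrableOn p (Ioi (max B 1)) volume :=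
        (paxis_integrableOn_p hp_int).mono_set
          (Ioi_subset_Ioi (le_trans zero_le_one (le_max_right B 1)))
      have hconst : IntegrableOn (fun _ : ℝ => L/2) (Ioi (max B 1)) volume := by
        refine Integrable.mono' hpi aestronglyMeasurable_const ?_
        filter_upwards [ae_restrict_mem measurableSet_Ioi] with x hx
        rw [Real.norm_eq_abs, abs_of_nonneg (by linarith : (0:ℝ) ≤ L/2)]
        exact hB x (le_trans (le_max_left _ _) (le_of_lt hx))
      rw [integrableOn_const_iff] at hconst
      rcases hconst with h | h
      · exact absurd (enorm_eq_zero.1 h) (ne_of_gt (by linarith))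
      · exact absurd h (by simp)
  linarith [hL]

lemma paxis_fubini (μ : Measure ℝ) [IsProbabilityMeasure μ]
    (hμpos : ∀ᵐ x ∂μ, 0 < x) (w : ℝ → ℝ) (hw : Measurable w)
    (hwint : Integrable (fun x => w x * x) μ) {t : ℝ} (ht : 0 < t) :
    (∫ x, w x * min x t ∂μ = ∫ s in Ioc 0 t, (∫ x in Ioi s, w x ∂μ) ∂volume)
      ∧ IntegrableOn (fun s => ∫ x in Ioi s, w x ∂μ) (Ioc 0 t) volume := by
  classical
  set ν := volume.restrict (Ioc (0:ℝ) t) with hν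
  have hνfin : IsFiniteMeasure ν :=
    ⟨by rw [hν, Measure.restrict_apply_univ]; exact measure_Ioc_lt_top⟩
  set f : ℝ × ℝ → ℝ := fun q => if q.2 < q.1 then w q.1 else 0 with hfdef
  have hfmeas : Measurable f :=
    Measurable.ite (measurableSet_lt measurable_snd measurable_fst)
      (hw.comp measurable_fst) measurable_const
  -- slice as indicator in second variable
  have hslice_fun : ∀ x : ℝ, (fun s => f (x, s)) = (Iio x).indicator (fun _ => w x) := by
    intro x; funext s
    simp only [hfdef, Set.indicator_apply, mem_Iio]
  have hmeas_nu : ∀ x : ℝ, 0 < x → ν (Iio x) = ENNReal.ofReal (min x t) := by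
    intro x hx
    rw [hν, Measure.restrict_apply measurableSet_Iio]
    rcases le_or_gt x t with h | h
    · have : Iio x ∩ Ioc 0 t = Ioo 0 x := by
        ext u; simp only [mem_inter_iff, mem_Iio, mem_Ioc, mem_Ioo]
        constructor
        · rintro ⟨h1, h2, _⟩; exact ⟨h2, h1⟩
        · rintro ⟨h1, h2⟩; exact ⟨h2, h1, le_trans h2.le h⟩
      rw [this, Real.volume_Ioo, sub_zero, min_eq_left h]
    · have : Iio x ∩ Ioc 0 t = Ioc 0 t := by
        rw [inter_eq_right]
        intro u hu; exact lt_of_le_of_lt hu.2 h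
      rw [this, Real.volume_Ioc, sub_zero, min_eq_right h.le]
  have hslice : ∀ x : ℝ, 0 < x → ∫ s, f (x, s) ∂ν = w x * min x t := by
    intro x hx
    rw [hslice_fun x, integral_indicator_const _ measurableSet_Iio, measureReal_def, hmeas_nu x hx,
      ENNReal.toReal_ofReal (le_min hx.le ht.le), smul_eq_mul, mul_comm]
  have hnormslice : ∀ x : ℝ, 0 < x → ∫ s, ‖f (x, s)‖ ∂ν = ‖w x‖ * min x t := by
    intro x hx
    have : (fun s => ‖f (x, s)‖) = (Iio x).indicator (fun _ => ‖w x‖) := by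
      funext s
      simp only [hfdef, Set.indicator_apply, mem_Iio]
      split <;> simp
    rw [this, integral_indicator_const _ measurableSet_Iio, measureReal_def, hmeas_nu x hx,
      ENNReal.toReal_ofReal (le_min hx.le ht.le), smul_eq_mul, mul_comm]
  have hint : Integrable f (μ.prod ν) := by
    rw [integrable_prod_iff hfmeas.aestronglyMeasurable]
    constructor
    · refine Eventually.of_forall fun x => ?_
      rw [hslice_fun x]
      exact (integrable_const (w x)).indicator measurableSet_Iio
    · refine Integrable.mono' hwint.norm
        (hfmeas.norm.aestronglyMeasurable.integral_prod_right') ?_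
      filter_upwards [hμpos] with x hx
      rw [Real.norm_eq_abs, abs_of_nonneg (integral_nonneg fun s => norm_nonneg _),
        hnormslice x hx]
      rw [Real.norm_eq_abs, Real.norm_eq_abs, abs_mul, abs_of_pos hx]
      exact mul_le_mul_of_nonneg_left (min_le_left _ _) (abs_nonneg _)
  have hswap := integral_integral_swap (f := fun x s => f (x, s)) hint
  have hinner : ∀ s : ℝ, ∫ x, f (x, s) ∂μ = ∫ x in Ioi s, w x ∂μ := by
    intro s
    have : (fun x => f (x, s)) = (Ioi s).indicator w := by
      funext x; simp only [hfdef, Set.indicator_apply, mem_Ioi]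
    rw [this, integral_indicator measurableSet_Ioi]
  constructor
  · calc ∫ x, w x * min x t ∂μ = ∫ x, ∫ s, f (x, s) ∂ν ∂μ := by
          refine integral_congr_ae ?_
          filter_upwards [hμpos] with x hx
          exact (hslice x hx).symm
      _ = ∫ s, ∫ x, f (x, s) ∂μ ∂ν := hswap
      _ = ∫ s in Ioc 0 t, (∫ x in Ioi s, w x ∂μ) ∂volume := by
          rw [hν]; exact integral_congr_ae (Eventually.of_forall fun s => hinner s)
  · have := hint.integral_prod_right
    refine this.congr (Eventually.of_forall fun s => hinner s)

lemma paxis_wd_setIntegral (d : ℝ → ℝ) (hd : Measurable d) (f : ℝ → ℝ) {A : Set ℝ}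
    (hA : MeasurableSet A) (hd0 : ∀ x ∈ A, 0 ≤ d x) :
    ∫ x in A, f x ∂(volume.withDensity (fun x => ENNReal.ofReal (d x)))
      = ∫ x in A, d x * f x ∂volume := by
  have h1 : (volume.withDensity (fun x => ENNReal.ofReal (d x))).restrict A
      = (volume.restrict A).withDensity (fun x => ENNReal.ofReal (d x)) :=
    restrict_withDensity hA _
  rw [h1]
  have h2 : (fun x => ENNReal.ofReal (d x))
      = (fun x => ((Real.toNNReal (d x) : ℝ≥0) : ENNReal)) := rfl
  rw [h2, integral_withDensity_eq_integral_smul₀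
    (hd.real_toNNReal.aemeasurable) f]
  refine setIntegral_congr_fun hA fun x hx => ?_
  simp only [NNReal.smul_def, smul_eq_mul, Real.coe_toNNReal _ (hd0 x hx)]

lemma paxis_g_forward {p : ℝ → ℝ} (hp_pos : ∀ x > 0, 0 < p x)
    (hp_smooth : ContDiffOn ℝ 1 p (Ioi 0)) (hpm : Measurable p)
    (hp_int : ∫ x in Ioi (0 : ℝ), p x = 1)
    (hC3 : IntegrableOn (fun x => x * |deriv p x|) (Ioi 0)) {s : ℝ} (hs : 0 < s) :
    ∫ x in Ioi s, (-(deriv p x / p x)) ∂(volume.withDensity (fun x => ENNReal.ofReal (p x)))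
      = p s := by
  rw [paxis_wd_setIntegral p hpm _ measurableSet_Ioi
    (fun x hx => (hp_pos x (lt_trans hs hx)).le)]
  have : EqOn (fun x => p x * (-(deriv p x / p x))) (fun x => -deriv p x) (Ioi s) := by
    intro x hx
    have hpx : p x ≠ 0 := (hp_pos x (lt_trans hs hx)).ne'
    field_simp
  rw [setIntegral_congr_fun measurableSet_Ioi this, integral_neg,
    paxis_integral_deriv hp_pos hp_smooth hp_int hC3 hs, neg_neg]

lemma paxis_wd_Iic {p : ℝ → ℝ} (hp_pos : ∀ x > 0, 0 < p x) (hp_zero : ∀ x ≤ 0, p x = 0)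
    (hpi : IntegrableOn p (Ioi 0) volume) {t : ℝ} (ht : 0 < t) :
    (volume.withDensity (fun x => ENNReal.ofReal (p x))) (Iic t)
      = ENNReal.ofReal (∫ x in Ioc 0 t, p x) := by
  rw [withDensity_apply _ measurableSet_Iic]
  have hsplit : Iic t = Iic 0 ∪ Ioc 0 t := (Iic_union_Ioc_eq_Iic ht.le).symm
  rw [hsplit, lintegral_union measurableSet_Ioc (Iic_disjoint_Ioc le_rfl)]
  have h0 : ∫⁻ x in Iic (0:ℝ), ENNReal.ofReal (p x) = 0 := by
    rw [setLIntegral_congr_fun measurableSet_Iic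
      (fun x hx => by rw [hp_zero x hx, ENNReal.ofReal_zero])]
    simp
  rw [h0, zero_add, ← ofReal_integral_eq_lintegral_ofReal
    (hpi.mono_set Ioc_subset_Ioi_self)
    (ae_restrict_of_forall_mem measurableSet_Ioc fun x hx => (hp_pos x hx.1).le)]

set_option maxHeartbeats 2000000 in
lemma paxis_backward {p : ℝ → ℝ} (hp_pos : ∀ x > 0, 0 < p x)
    (hp_smooth : ContDiffOn ℝ 1 p (Ioi 0)) (hp_zero : ∀ x ≤ 0, p x = 0)
    (hp_int : ∫ x in Ioi (0:ℝ), p x = 1)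
    (hC3 : IntegrableOn (fun x => x * |deriv p x|) (Ioi 0))
    (μ : Measure ℝ) [IsProbabilityMeasure μ] (hμpos : ∀ᵐ x ∂μ, 0 < x)
    (hwint : Integrable (fun x => -(deriv p x / p x) * x) μ)
    (hyp : ∀ t > 0, (μ (Iic t)).toReal = ∫ x, -(deriv p x / p x) * min x t ∂μ) :
    μ = volume.withDensity fun x => ENNReal.ofReal (p x) := by
  classical
  have hpm : Measurable p := paxis_meas_p hp_smooth hp_zero
  set w : ℝ → ℝ := fun x => -(deriv p x / p x) with hwdef
  have hwm : Measurable w := ((measurable_deriv p).div hpm).neg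
  set g : ℝ → ℝ := fun s => ∫ x in Ioi s, w x ∂μ with hgdef
  -- (1)+(2)
  have hgInt : ∀ t > (0:ℝ), IntegrableOn g (Ioc 0 t) volume := fun t ht =>
    (paxis_fubini μ hμpos w hwm hwint ht).2
  have hFg : ∀ t > (0:ℝ), (μ (Iic t)).toReal = ∫ s in Ioc 0 t, g s := fun t ht => by
    rw [hyp t ht]; exact (paxis_fubini μ hμpos w hwm hwint ht).1
  -- (3)
  have hIic0 : μ (Iic 0) = 0 := by
    rw [ae_iff] at hμpos
    convert hμpos using 2
    ext x; simp [not_lt]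
  -- (4)
  have hIoc0 : ∀ t > (0:ℝ), μ (Iic t) = μ (Ioc 0 t) := by
    intro t ht
    rw [← Iic_union_Ioc_eq_Iic ht.le,
      measure_union (Iic_disjoint_Ioc le_rfl) measurableSet_Ioc, hIic0, zero_add]
  -- w integrable on tails
  have hwOn : ∀ s > (0:ℝ), IntegrableOn w (Ioi s) μ := by
    intro s hs
    refine Integrable.mono' ((hwint.norm.const_mul (1/s)).restrict (s := Ioi s))
      hwm.aestronglyMeasurable.restrict ?_
    filter_upwards [ae_restrict_mem measurableSet_Ioi] with x hx
    have hx' : s < x := hx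
    rw [Real.norm_eq_abs, Real.norm_eq_abs, abs_mul, abs_of_pos (lt_trans hs hx'),
      div_mul_eq_mul_div, le_div_iff₀ hs, one_mul]
    exact mul_le_mul_of_nonneg_left hx'.le (abs_nonneg _)
  -- (5) increments
  have hdiff : ∀ a b, 0 < a → a ≤ b → (μ (Ioc a b)).toReal = ∫ s in Ioc a b, g s := by
    intro a b ha hab
    have hb' : (0:ℝ) < b := lt_of_lt_of_le ha hab
    have h1 : μ (Ioc 0 b) = μ (Ioc 0 a) + μ (Ioc a b) := by
      rw [← measure_union (Ioc_disjoint_Ioc_of_le le_rfl) measurableSet_Ioc,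
        Ioc_union_Ioc_eq_Ioc ha.le hab]
    have h3 : (μ (Ioc 0 b)).toReal = (μ (Ioc 0 a)).toReal + (μ (Ioc a b)).toReal := by
      rw [h1, ENNReal.toReal_add (measure_ne_top μ _) (measure_ne_top μ _)]
    have h2 : ∫ s in Ioc 0 b, g s = (∫ s in Ioc 0 a, g s) + ∫ s in Ioc a b, g s := by
      rw [← setIntegral_union (Ioc_disjoint_Ioc_of_le le_rfl) measurableSet_Ioc
        ((hgInt b hb').mono_set (Ioc_subset_Ioc le_rfl hab))
        ((hgInt b hb').mono_set (Ioc_subset_Ioc ha.le le_rfl)),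
        Ioc_union_Ioc_eq_Ioc ha.le hab]
    have e1 := hFg a ha; have e2 := hFg b hb'
    rw [hIoc0 a ha] at e1; rw [hIoc0 b hb'] at e2
    linarith
  -- (6) bound
  set M : ℝ := ∫ x, |w x * x| ∂μ with hMdef
  have hM0 : 0 ≤ M := integral_nonneg fun x => abs_nonneg _
  have hgbound : ∀ s > (0:ℝ), |g s| ≤ M / s := by
    intro s hs
    have h1 : |g s| ≤ ∫ x in Ioi s, |w x| ∂μ := by
      simpa [Real.norm_eq_abs] using norm_integral_le_integral_norm (μ := μ.restrict (Ioi s)) w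
    have h2 : ∫ x in Ioi s, |w x| ∂μ ≤ ∫ x in Ioi s, |w x * x| / s ∂μ := by
      refine setIntegral_mono_on (hwOn s hs).abs ((hwint.abs.restrict).div_const s)
        measurableSet_Ioi ?_
      intro x hx
      rw [le_div_iff₀ hs, abs_mul, abs_of_pos (lt_trans hs hx)]
      exact mul_le_mul_of_nonneg_left (le_of_lt hx) (abs_nonneg _)
    have h3 : ∫ x in Ioi s, |w x * x| / s ∂μ = (∫ x in Ioi s, |w x * x| ∂μ) / s :=
      integral_div s _
    have h4 : ∫ x in Ioi s, |w x * x| ∂μ ≤ M :=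
      setIntegral_le_integral hwint.abs (Eventually.of_forall fun x => abs_nonneg _)
    calc |g s| ≤ ∫ x in Ioi s, |w x * x| / s ∂μ := le_trans h1 h2
      _ = (∫ x in Ioi s, |w x * x| ∂μ) / s := h3
      _ ≤ M / s := by gcongr
  -- auxiliary finite measure
  set ν' : Measure ℝ := μ.withDensity (fun x => ENNReal.ofReal |w x * x|) with hν'def
  have hν'fin : IsFiniteMeasure ν' := by
    constructor
    rw [hν'def, withDensity_apply _ MeasurableSet.univ, Measure.restrict_univ]
    have hh : ∀ x : ℝ, ENNReal.ofReal |w x * x| = (‖w x * x‖₊ : ℝ≥0∞) := fun x => by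
      rw [← Real.norm_eq_abs]; exact ENNReal.ofReal_eq_coe_nnreal (norm_nonneg _)
    simp_rw [hh]
    exact hwint.hasFiniteIntegral
  have hν'app : ∀ A : Set ℝ, MeasurableSet A →
      (ν' A).toReal = ∫ x in A, |w x * x| ∂μ := by
    intro A hA
    rw [hν'def, withDensity_apply _ hA,
      ← ofReal_integral_eq_lintegral_ofReal (hwint.abs.restrict)
        (Eventually.of_forall fun x => abs_nonneg _),
      ENNReal.toReal_ofReal (integral_nonneg fun x => abs_nonneg _)]
  -- (7) no atoms
  have hatom : ∀ a > (0:ℝ), μ {a} = 0 := by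
    intro a ha
    have key : ∀ a', a/2 ≤ a' → a' < a → (μ {a}).toReal ≤ (2*M/a) * (a - a') := by
      intro a' h1 h2
      have ha' : 0 < a' := lt_of_lt_of_le (by linarith) h1
      have hsub : (μ {a}).toReal ≤ (μ (Ioc a' a)).toReal := by
        refine ENNReal.toReal_mono (measure_ne_top μ _) (measure_mono ?_)
        intro x hx
        rw [mem_singleton_iff] at hx; subst hx; exact ⟨h2, le_rfl⟩
      rw [hdiff a' a ha' h2.le] at hsub
      have hb : ∫ s in Ioc a' a, g s ≤ ∫ s in Ioc a' a, (2*M/a) := by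
        refine setIntegral_mono_on ((hgInt a ha).mono_set (Ioc_subset_Ioc ha'.le le_rfl))
          (integrableOn_const measure_Ioc_lt_top.ne) measurableSet_Ioc ?_
        intro s hs
        calc g s ≤ |g s| := le_abs_self _
          _ ≤ M / s := hgbound s (lt_trans ha' hs.1)
          _ ≤ 2*M/a := by
              rw [div_le_div_iff₀ (lt_trans ha' hs.1) ha]
              nlinarith [hs.1]
      rw [setIntegral_const, measureReal_def, Real.volume_Ioc, ENNReal.toReal_ofReal (by linarith), smul_eq_mul] at hb
      calc (μ {a}).toReal ≤ ∫ s in Ioc a' a, g s := hsub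
        _ ≤ (a - a') * (2*M/a) := hb
        _ = (2*M/a) * (a - a') := by ring
    have hten : Tendsto (fun a' => (2*M/a) * (a - a')) (𝓝[<] a) (𝓝 ((2*M/a) * (a - a))) :=
      Tendsto.mono_left (tendsto_const_nhds.mul (tendsto_const_nhds.sub tendsto_id))
        nhdsWithin_le_nhds
    rw [sub_self, mul_zero] at hten
    have hev : ∀ᶠ a' in 𝓝[<] a, (μ {a}).toReal ≤ (2*M/a) * (a - a') := by
      filter_upwards [Ico_mem_nhdsLT_of_mem
        (show a ∈ Ioc (a/2) a from ⟨by linarith, le_rfl⟩)] with a' ha'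
      exact key a' ha'.1 ha'.2
    have h0 : (μ {a}).toReal = 0 :=
      le_antisymm (ge_of_tendsto hten hev) ENNReal.toReal_nonneg
    rwa [ENNReal.toReal_eq_zero_iff, or_iff_left (measure_ne_top μ _)] at h0
  have hν'atom : ∀ a > (0:ℝ), ν' {a} = 0 := by
    intro a ha
    rw [hν'def, withDensity_apply _ (measurableSet_singleton a),
      setLIntegral_measure_zero _ _ (hatom a ha)]
  -- split identity for g
  have hgsplit : ∀ a b : ℝ, 0 < a → a ≤ b → g a - g b = ∫ x in Ioc a b, w x ∂μ := by
    intro a b ha hab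
    have hIoi : Ioi a = Ioc a b ∪ Ioi b := (Ioc_union_Ioi_eq_Ioi hab).symm
    have : g a = (∫ x in Ioc a b, w x ∂μ) + ∫ x in Ioi b, w x ∂μ := by
      rw [hgdef]; simp only
      rw [hIoi, setIntegral_union (Ioc_disjoint_Ioi le_rfl) measurableSet_Ioi
        ((hwOn a ha).mono_set Ioc_subset_Ioi_self) (hwOn b (lt_of_lt_of_le ha hab))]
    rw [this]; show _ + g b - g b = _; ring
  -- (8) continuity
  have hgcont : ∀ s₀ > (0:ℝ), ContinuousAt g s₀ := by
    intro s₀ hs₀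
    rw [Metric.continuousAt_iff]
    intro ε hε
    set S : ℕ → Set ℝ := fun n => Ioc (s₀ - 1/(n+1)) (s₀ + 1/(n+1)) \ {s₀} with hSdef
    have hSmeas : ∀ n, NullMeasurableSet (S n) ν' := fun n =>
      (measurableSet_Ioc.diff (measurableSet_singleton _)).nullMeasurableSet
    have hSanti : Antitone S := by
      intro m n hmn
      refine diff_subset_diff_left (Ioc_subset_Ioc ?_ ?_) <;>
      · have h1 : 1/((n:ℝ)+1) ≤ 1/((m:ℝ)+1) := by
          apply one_div_le_one_div_of_le (by positivity)
          exact_mod_cast Nat.succ_le_succ hmn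
        linarith
    have hSempty : ⋂ n, S n = ∅ := by
      ext x
      simp only [mem_iInter, mem_empty_iff_false, iff_false, not_forall]
      by_contra hc
      push_neg at hc
      have hxs : x ≠ s₀ := fun h => by
        have := hc 0
        rw [h] at this
        exact this.2 rfl
      obtain ⟨n, hn⟩ := exists_nat_gt (1/|x - s₀|)
      have hd0 : 0 < |x - s₀| := abs_pos.2 (sub_ne_zero.2 hxs)
      have h2 := hc n
      have h3 : |x - s₀| ≤ 1/((n:ℝ)+1) := by
        refine abs_le.2 ⟨?_, ?_⟩
        · have := (h2.1).1; linarith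
        · have := (h2.1).2; linarith
      have h4 : 1/((n:ℝ)+1) < |x - s₀| := by
        rw [div_lt_iff₀ hd0] at hn
        rw [div_lt_iff₀ (by positivity)]
        nlinarith [hd0.le]
      linarith
    have htend : Tendsto (fun n => ν' (S n)) atTop (𝓝 0) := by
      have h := tendsto_measure_iInter_atTop hSmeas hSanti ⟨0, measure_ne_top _ _⟩
      rw [hSempty] at h
      simpa [Function.comp_def] using h
    have hccpos : (0:ℝ) < ε * (s₀/2) / 2 := by positivity
    have hev : ∀ᶠ n in atTop, ν' (S n) < ENNReal.ofReal (ε * (s₀/2)/2) :=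
      htend.eventually (gt_mem_nhds (by rw [ENNReal.ofReal_pos]; exact hccpos))
    obtain ⟨n, hn⟩ := hev.exists
    have hn1pos : (0:ℝ) < 1/(n+1) := by positivity
    refine ⟨min (1/(n+1)) (s₀/2), lt_min hn1pos (by linarith), ?_⟩
    intro s hd
    rw [Real.dist_eq] at hd ⊢
    rcases eq_or_ne s s₀ with rfl | hne
    · simpa using hε
    have hδ1 : |s - s₀| < 1/(n+1) := lt_of_lt_of_le hd (min_le_left _ _)
    have hδ2 : |s - s₀| < s₀/2 := lt_of_lt_of_le hd (min_le_right _ _)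
    have hspos : s₀/2 < s := by
      have := neg_abs_le (s - s₀); linarith
    set m := min s s₀ with hm
    set Mx := max s s₀ with hMx
    have hmpos : s₀/2 < m := lt_min hspos (by linarith)
    have hmMx : m ≤ Mx := min_le_max
    have habs : |g s - g s₀| = |g m - g Mx| := by
      rcases le_total s s₀ with h | h
      · rw [hm, hMx, min_eq_left h, max_eq_right h]
      · rw [hm, hMx, min_eq_right h, max_eq_left h, abs_sub_comm]
    have hkey : |g m - g Mx| ≤ (2/s₀) * (ν' (Ioc m Mx)).toReal := by
      rw [hgsplit m Mx (by linarith) hmMx]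
      have hh1 : |∫ x in Ioc m Mx, w x ∂μ| ≤ ∫ x in Ioc m Mx, |w x| ∂μ := by
        simpa [Real.norm_eq_abs] using
          norm_integral_le_integral_norm (μ := μ.restrict (Ioc m Mx)) w
      have hh2 : ∫ x in Ioc m Mx, |w x| ∂μ ≤ ∫ x in Ioc m Mx, (2/s₀) * |w x * x| ∂μ := by
        refine setIntegral_mono_on (((hwOn m (by linarith)).mono_set
          Ioc_subset_Ioi_self).abs) ((hwint.abs.restrict).const_mul _) measurableSet_Ioc ?_
        intro x hx
        have hxm : m < x := hx.1
        have hxpos : 0 < x := by linarith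
        rw [abs_mul, abs_of_pos hxpos, div_mul_eq_mul_div, le_div_iff₀ hs₀]
        nlinarith [abs_nonneg (w x)]
      have hh3 : ∫ x in Ioc m Mx, (2/s₀) * |w x * x| ∂μ
          = (2/s₀) * (ν' (Ioc m Mx)).toReal := by
        rw [integral_const_mul, hν'app _ measurableSet_Ioc]
      calc |∫ x in Ioc m Mx, w x ∂μ| ≤ _ := hh1
        _ ≤ _ := hh2
        _ = _ := hh3
    have hsubset : Ioc m Mx ⊆ S n ∪ {s₀} := by
      intro u hu
      rcases eq_or_ne u s₀ with rfl | hu0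
      · exact Or.inr rfl
      refine Or.inl ⟨⟨?_, ?_⟩, hu0⟩
      · have h1 : s₀ - |s - s₀| ≤ m :=
          le_min (by have := neg_abs_le (s - s₀); linarith) (by have := abs_nonneg (s - s₀); linarith)
        have := hu.1; linarith
      · have h2 : Mx ≤ s₀ + |s - s₀| :=
          max_le (by have := le_abs_self (s - s₀); linarith) (by have := abs_nonneg (s - s₀); linarith)
        have := hu.2; linarith
    have hmeaslt : (ν' (Ioc m Mx)).toReal < ε * (s₀/2)/2 := by
      have h1 : ν' (Ioc m Mx) ≤ ν' (S n) + ν' {s₀} :=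
        le_trans (measure_mono hsubset) (measure_union_le _ _)
      rw [hν'atom s₀ hs₀, add_zero] at h1
      have h2 : ν' (Ioc m Mx) < ENNReal.ofReal (ε * (s₀/2)/2) := lt_of_le_of_lt h1 hn
      have := ENNReal.toReal_lt_toReal (measure_ne_top _ _) ENNReal.ofReal_ne_top |>.2 h2
      rwa [ENNReal.toReal_ofReal hccpos.le] at this
    calc |g s - g s₀| = |g m - g Mx| := habs
      _ ≤ (2/s₀) * (ν' (Ioc m Mx)).toReal := hkey
      _ < (2/s₀) * (ε * (s₀/2)/2) := by
          apply mul_lt_mul_of_pos_left hmeaslt (by positivity)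
      _ = ε/2 := by field_simp
      _ < ε := by linarith
  -- (9) nonnegativity
  have hgnn : ∀ a > (0:ℝ), 0 ≤ g a := by
    intro a ha
    by_contra hneg
    push_neg at hneg
    have hcont := hgcont a ha
    rw [Metric.continuousAt_iff] at hcont
    obtain ⟨δ, hδpos, hδ⟩ := hcont (-(g a)/2) (by linarith)
    set a' := max (a/2) (a - δ/2) with ha'def
    have ha'lt : a' < a := max_lt (by linarith) (by linarith)
    have ha'pos : 0 < a' := lt_of_lt_of_le (by linarith) (le_max_left _ _)
    have hub : ∀ s ∈ Ioc a' a, g s ≤ g a / 2 := by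
      intro s hs
      have hda : a - s < δ := by
        have h1 : a - δ/2 ≤ a' := le_max_right _ _
        have := hs.1; linarith
      have hdist : dist s a < δ := by
        have h1 := hs.1
        have h2 := hs.2
        rw [Real.dist_eq, abs_lt]
        constructor
        · linarith
        · linarith
      have := hδ hdist
      rw [Real.dist_eq, abs_lt] at this
      have h2 := this.2
      linarith
    have h0 : 0 ≤ ∫ s in Ioc a' a, g s := by
      rw [← hdiff a' a ha'pos ha'lt.le]; exact ENNReal.toReal_nonneg
    have hlt : ∫ s in Ioc a' a, g s ≤ (a - a') * (g a / 2) := by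
      have hmono := setIntegral_mono_on ((hgInt a ha).mono_set (Ioc_subset_Ioc ha'pos.le le_rfl))
        (integrableOn_const measure_Ioc_lt_top.ne) measurableSet_Ioc hub
      rwa [setIntegral_const, measureReal_def, Real.volume_Ioc, ENNReal.toReal_ofReal (by linarith),
        smul_eq_mul] at hmono
    nlinarith [mul_pos (sub_pos.2 ha'lt) (by linarith : (0:ℝ) < -(g a)/2)]
  -- (10) μ is given by density g
  have hgcontOn : ContinuousOn g (Ioi 0) := fun x hx => (hgcont x hx).continuousWithinAt
  have hμν : μ = volume.withDensity (fun x => ENNReal.ofReal ((Ioi 0).indicator g x)) := by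
    refine Measure.ext_of_Iic μ _ (fun a => ?_)
    rcases le_or_gt a 0 with ha | ha
    · rw [measure_mono_null (Iic_subset_Iic.2 ha) hIic0,
        withDensity_apply _ measurableSet_Iic]
      refine ((setLIntegral_congr_fun (g := fun _ => 0) measurableSet_Iic
        (fun x hx => ?_)).trans lintegral_zero).symm
      rw [Set.indicator_apply,
        if_neg (by simp only [mem_Ioi, not_lt]; exact le_trans (mem_Iic.1 hx) ha),
        ENNReal.ofReal_zero]
    · have lhs : μ (Iic a) = ENNReal.ofReal (∫ s in Ioc 0 a, g s) := by
        rw [← hFg a ha, ENNReal.ofReal_toReal (measure_ne_top μ _)]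
      rw [lhs, withDensity_apply _ measurableSet_Iic,
        ← Iic_union_Ioc_eq_Iic ha.le,
        lintegral_union measurableSet_Ioc (Iic_disjoint_Ioc le_rfl)]
      have hz : ∫⁻ x in Iic (0:ℝ), ENNReal.ofReal ((Ioi 0).indicator g x) = 0 := by
        refine (setLIntegral_congr_fun (g := fun _ => 0) measurableSet_Iic
          (fun x hx => ?_)).trans lintegral_zero
        rw [Set.indicator_apply,
          if_neg (by simp only [mem_Ioi, not_lt]; exact mem_Iic.1 hx),
          ENNReal.ofReal_zero]
      rw [hz, zero_add]
      rw [setLIntegral_congr_fun measurableSet_Ioc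
        ((fun x hx => by
          show ENNReal.ofReal ((Ioi 0).indicator g x) = ENNReal.ofReal (g x)
          rw [Set.indicator_apply, if_pos (mem_Ioi.2 hx.1)])),
        ← ofReal_integral_eq_lintegral_ofReal (hgInt a ha)
          (ae_restrict_of_forall_mem measurableSet_Ioc fun x hx => hgnn x hx.1)]
  -- density measurability
  have hdmeas : Measurable ((Ioi (0:ℝ)).indicator g) := by
    have h := ContinuousOn.measurable_piecewise (g := fun _ => (0:ℝ))
      hgcontOn continuousOn_const measurableSet_Ioi
    exact h
  -- μ-integrals as Lebesgue integrals with density g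
  have hconv : ∀ A : Set ℝ, MeasurableSet A → A ⊆ Ioi 0 → ∀ f : ℝ → ℝ,
      ∫ x in A, f x ∂μ = ∫ x in A, g x * f x ∂volume := by
    intro A hA hA0 f
    rw [hμν, paxis_wd_setIntegral _ hdmeas f hA
      (fun x hx => by
        rw [Set.indicator_apply, if_pos (hA0 hx)]
        exact hgnn x (hA0 hx))]
    refine setIntegral_congr_fun hA fun x hx => ?_
    rw [Set.indicator_apply, if_pos (hA0 hx)]
  -- continuity of the integrand k
  have hwcont : ContinuousOn w (Ioi 0) := by
    have h1 : ContinuousOn (deriv p) (Ioi 0) :=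
      hp_smooth.continuousOn_deriv_of_isOpen isOpen_Ioi le_rfl
    exact (h1.div hp_smooth.continuousOn (fun x hx => (hp_pos x hx).ne')).neg
  set k : ℝ → ℝ := fun u => g u * w u with hkdef
  have hkcont : ContinuousOn k (Ioi 0) := hgcontOn.mul hwcont
  have hgrep : ∀ s > (0:ℝ), g s = ∫ x in Ioi s, k x ∂volume :=
    fun s hs => hconv (Ioi s) measurableSet_Ioi (Ioi_subset_Ioi hs.le) w
  -- integrability of k on tails
  have hkint : ∀ a > (0:ℝ), IntegrableOn k (Ioi a) volume := by
    intro a ha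
    have h1 : IntegrableOn (fun x => w x * x) (Ioi a) μ := hwint.restrict
    rw [hμν] at h1
    rw [IntegrableOn, restrict_withDensity measurableSet_Ioi] at h1
    have hcoe : (fun x => ENNReal.ofReal ((Ioi 0).indicator g x))
        = (fun x => ((Real.toNNReal ((Ioi 0).indicator g x) : ℝ≥0) : ℝ≥0∞)) := rfl
    rw [hcoe, integrable_withDensity_iff_integrable_smul₀
      (by exact (measurable_real_toNNReal.comp hdmeas).aemeasurable)] at h1
    have h3 : IntegrableOn (fun x => g x * (w x * x)) (Ioi a) volume := by
      refine h1.congr ?_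
      filter_upwards [ae_restrict_mem measurableSet_Ioi] with x hx
      have hx0 : x ∈ Ioi (0:ℝ) := lt_trans ha hx
      rw [NNReal.smul_def, smul_eq_mul, Set.indicator_apply, if_pos hx0,
        Real.coe_toNNReal _ (hgnn x hx0)]
    refine Integrable.mono' (h3.norm.const_mul (1/a))
      ((hkcont.mono (Ioi_subset_Ioi ha.le)).aestronglyMeasurable measurableSet_Ioi) ?_
    filter_upwards [ae_restrict_mem measurableSet_Ioi] with x hx
    have hx' : a < x := hx
    rw [Real.norm_eq_abs, Real.norm_eq_abs, hkdef]
    simp only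
    rw [div_mul_eq_mul_div, le_div_iff₀ ha, one_mul]
    have : |g x * (w x * x)| = |g x * w x| * x := by
      rw [← mul_assoc, abs_mul, abs_of_pos (lt_trans ha hx')]
    rw [this]
    exact mul_le_mul_of_nonneg_left hx'.le (abs_nonneg _)
  -- splitting for the Lebesgue representation
  have hsplitL : ∀ a b : ℝ, 0 < a → a ≤ b →
      g a = (∫ u in Ioc a b, k u ∂volume) + g b := by
    intro a b ha hab
    rw [hgrep a ha, hgrep b (lt_of_lt_of_le ha hab),
      ← setIntegral_union (Ioc_disjoint_Ioi le_rfl) measurableSet_Ioi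
        ((hkint a ha).mono_set Ioc_subset_Ioi_self) (hkint b (lt_of_lt_of_le ha hab)),
      Ioc_union_Ioi_eq_Ioi hab]
  have hrep : ∀ a > (0:ℝ), g a = g 1 + ∫ u in a..(1:ℝ), k u := by
    intro a ha
    rcases le_or_gt a 1 with h | h
    · rw [intervalIntegral.integral_of_le h, hsplitL a 1 ha h]; ring
    · rw [intervalIntegral.integral_symm, intervalIntegral.integral_of_le h.le,
        hsplitL 1 a one_pos h.le]
      ring
  -- derivative of g
  have hgderiv : ∀ a ∈ Ioi (0:ℝ), HasDerivAt g (-(k a)) a := by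
    intro a ha
    have hm : (0:ℝ) < min a 1 := lt_min ha one_pos
    have hii : IntervalIntegrable k volume a 1 := by
      rw [intervalIntegrable_iff]
      refine (hkint (min a 1 / 2) (by positivity)).mono_set ?_
      refine subset_trans Ioc_subset_Ioi_self (Ioi_subset_Ioi ?_)
      linarith
    have hsm := hkcont.stronglyMeasurableAtFilter (μ := volume) isOpen_Ioi
    have hG : HasDerivAt (fun u => ∫ x in u..(1:ℝ), k x) (-(k a)) a :=
      intervalIntegral.integral_hasDerivAt_left hii (hsm a ha)
        (hkcont.continuousAt (isOpen_Ioi.mem_nhds ha))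
    have hGa : HasDerivAt (fun u => g 1 + ∫ x in u..(1:ℝ), k x) (-(k a)) a := hG.const_add _
    refine hGa.congr_of_eventuallyEq ?_
    filter_upwards [isOpen_Ioi.mem_nhds ha] with u hu
    exact hrep u hu
  -- the quotient g/p is constant
  have hq : ∀ a ∈ Ioi (0:ℝ), HasDerivWithinAt (fun x => g x / p x) 0 (Ioi 0) a := by
    intro a ha
    have hpa : HasDerivAt p (deriv p a) a :=
      ((hp_smooth.differentiableOn one_ne_zero).differentiableAt
        (isOpen_Ioi.mem_nhds ha)).hasDerivAt
    have hpa' : p a ≠ 0 := (hp_pos a ha).ne'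
    have h := (hgderiv a ha).div hpa hpa'
    have hval : (-(k a) * p a - g a * deriv p a) / p a ^ 2 = 0 := by
      rw [hkdef]
      simp only [hwdef]
      field_simp
      ring
    rw [hval] at h
    exact h.hasDerivWithinAt
  have hconst : ∀ a > (0:ℝ), g a / p a = g 1 / p 1 := by
    intro a ha
    have h := Convex.norm_image_sub_le_of_norm_hasDerivWithin_le (C := 0) (f := fun x => g x / p x)
      (f' := fun _ => (0:ℝ)) (fun x hx => hq x hx) (fun x _ => by simp)
      (convex_Ioi 0) (mem_Ioi.2 one_pos) (mem_Ioi.2 ha)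
    rw [zero_mul, Real.norm_eq_abs] at h
    have := abs_nonpos_iff.1 (le_trans h le_rfl)
    linarith [this, sub_eq_zero.1 this]
  have hgc : ∀ a > (0:ℝ), g a = (g 1 / p 1) * p a := by
    intro a ha
    have h1 : g a = g a / p a * p a := (div_mul_cancel₀ _ (hp_pos a ha).ne').symm
    rw [h1, hconst a ha]
  -- (16) the constant is one
  have hc1 : g 1 / p 1 = 1 := by
    have hUiic : (⋃ n : ℕ, Iic (n:ℝ)) = univ := by
      ext x
      simp only [mem_iUnion, mem_Iic, mem_univ, iff_true]
      obtain ⟨n, hn⟩ := exists_nat_ge x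
      exact ⟨n, hn⟩
    have hUioc : (⋃ n : ℕ, Ioc (0:ℝ) n) = Ioi 0 := by
      ext x
      simp only [mem_iUnion, mem_Ioc, mem_Ioi]
      constructor
      · rintro ⟨n, h1, h2⟩; exact h1
      · intro hx
        obtain ⟨n, hn⟩ := exists_nat_ge x
        exact ⟨n, hx, hn⟩
    have hten1 : Tendsto (fun n : ℕ => (μ (Iic (n:ℝ))).toReal) atTop (𝓝 1) := by
      have h1 : Tendsto (fun n : ℕ => μ (Iic (n:ℝ))) atTop (𝓝 (μ univ)) := by
        have := tendsto_measure_iUnion_atTop (μ := μ)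
          (s := fun n : ℕ => Iic (n:ℝ)) (fun m n hmn => Iic_subset_Iic.2 (by exact_mod_cast hmn))
        rwa [hUiic] at this
      rw [measure_univ] at h1
      have h2 := (ENNReal.continuousAt_toReal (by simp)).tendsto.comp h1
      simpa [Function.comp_def] using h2
    have hten2 : Tendsto (fun n : ℕ => ∫ x in Ioc (0:ℝ) n, p x) atTop (𝓝 1) := by
      have h := tendsto_setIntegral_of_monotone (μ := volume) (f := p)
        (s := fun n : ℕ => Ioc (0:ℝ) n) (fun n => measurableSet_Ioc)
        (fun m n hmn => Ioc_subset_Ioc le_rfl (by exact_mod_cast hmn))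
        (by rw [hUioc]; exact paxis_integrableOn_p hp_int)
      rw [hUioc, hp_int] at h
      exact h
    have heq : ∀ᶠ n : ℕ in atTop, (μ (Iic (n:ℝ))).toReal
        = (g 1 / p 1) * ∫ x in Ioc (0:ℝ) n, p x := by
      filter_upwards [eventually_ge_atTop 1] with n hn
      have hn' : (0:ℝ) < n := by exact_mod_cast lt_of_lt_of_le zero_lt_one (by exact_mod_cast hn)
      rw [hFg n hn',
        setIntegral_congr_fun measurableSet_Ioc (fun x hx => hgc x hx.1),
        integral_const_mul]
    have hten3 : Tendsto (fun n : ℕ => (μ (Iic (n:ℝ))).toReal) atTop (𝓝 (g 1 / p 1 * 1)) :=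
      Tendsto.congr' (EventuallyEq.symm heq) (tendsto_const_nhds.mul hten2)
    have := tendsto_nhds_unique hten1 hten3
    rw [mul_one] at this
    exact this.symm
  -- (17) finish
  rw [hμν]
  congr 1
  funext x
  rcases lt_or_ge 0 x with hx | hx
  · rw [Set.indicator_apply, if_pos (mem_Ioi.2 hx), hgc x hx, hc1, one_mul]
  · rw [Set.indicator_apply, if_neg (by simpa using not_lt.2 hx : ¬ x ∈ Ioi (0:ℝ)), hp_zero x hx]

set_option maxHeartbeats 1000000 in
theorem positive_axis_cdf_characterization
    {Ω : Type*} [MeasurableSpace Ω] (ℙ : Measure Ω) [IsProbabilityMeasure ℙ]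
    (X : Ω → ℝ) (hX : Measurable X) (hXpos : ∀ᵐ ω ∂ℙ, 0 < X ω)
    (p : ℝ → ℝ) (hp_pos : ∀ x > 0, 0 < p x)
    (hp_smooth : ContDiffOn ℝ 1 p (Ioi 0))
    (hp_zero : ∀ x ≤ 0, p x = 0)
    (hp_int : ∫ x in Ioi (0 : ℝ), p x = 1)
    (P : ℝ → ℝ) (hP : ∀ x, P x = ∫ s in Ioc (0 : ℝ) x, p s)
    (hC3 : IntegrableOn (fun x => x * |deriv p x|) (Ioi 0))
    (hC4 : Tendsto (fun x => P x / p x) (nhdsWithin 0 (Ioi 0)) (nhds 0))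
    (hC5 : Tendsto (fun x => (1 - P x) / p x) atTop (nhds 0))
    (hC2 : ∃ C : ℝ, ∀ x > 0, |deriv p x * min (P x) (1 - P x) / (p x) ^ 2| ≤ C)
    (hXint : Integrable (fun ω => deriv p (X ω) / p (X ω) * X ω) ℙ) :
    Measure.map X ℙ = volume.withDensity (fun x => ENNReal.ofReal (p x)) ↔
      ∀ t > 0, (ℙ {ω | X ω ≤ t}).toReal =
        ∫ ω, -(deriv p (X ω) / p (X ω)) * min (X ω) t ∂ℙ := by
  classical
  have hpm : Measurable p := paxis_meas_p hp_smooth hp_zero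
  set w : ℝ → ℝ := fun x => -(deriv p x / p x) with hwdef
  have hwm : Measurable w := ((measurable_deriv p).div hpm).neg
  set μ : Measure ℝ := Measure.map X ℙ with hμdef
  have hprob : IsProbabilityMeasure μ := Measure.isProbabilityMeasure_map hX.aemeasurable
  have hμpos : ∀ᵐ x ∂μ, 0 < x := by
    rw [hμdef, ae_map_iff hX.aemeasurable measurableSet_Ioi]
    exact hXpos
  have hwint : Integrable (fun x => w x * x) μ := by
    have h0 : Integrable (fun x => deriv p x / p x * x) μ := by
      rw [hμdef, integrable_map_measure
        ((show Measurable fun x : ℝ => deriv p x / p x * x from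
          ((measurable_deriv p).div hpm).mul measurable_id).aestronglyMeasurable)
        hX.aemeasurable]
      exact hXint
    refine h0.neg.congr (Eventually.of_forall fun x => ?_)
    show -(deriv p x / p x * x) = -(deriv p x / p x) * x
    ring
  have hRHS : ∀ t : ℝ, (∫ ω, -(deriv p (X ω) / p (X ω)) * min (X ω) t ∂ℙ)
      = ∫ x, w x * min x t ∂μ := by
    intro t
    rw [hμdef, integral_map hX.aemeasurable
      ((show Measurable fun x : ℝ => w x * min x t from
        hwm.mul (measurable_id.min measurable_const)).aestronglyMeasurable)]
  have hF : ∀ t : ℝ, ℙ {ω | X ω ≤ t} = μ (Iic t) := fun t =>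
    (Measure.map_apply hX measurableSet_Iic).symm
  constructor
  · intro hmap t ht
    rw [hRHS t, hF t, (paxis_fubini μ hμpos w hwm hwint ht).1]
    have hg : EqOn (fun s => ∫ x in Ioi s, w x ∂μ) p (Ioc 0 t) := by
      intro s hs
      show (∫ x in Ioi s, w x ∂μ) = p s
      rw [hmap]
      exact paxis_g_forward hp_pos hp_smooth hpm hp_int hC3 hs.1
    rw [setIntegral_congr_fun measurableSet_Ioc hg, hmap,
      paxis_wd_Iic hp_pos hp_zero (paxis_integrableOn_p hp_int) ht,
      ENNReal.toReal_ofReal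
        (setIntegral_nonneg measurableSet_Ioc fun x hx => (hp_pos x hx.1).le)]
  · intro hyp
    refine paxis_backward hp_pos hp_smooth hp_zero hp_int hC3 μ hμpos hwint ?_
    intro t ht
    rw [← hF t, ← hRHS t]
    exact hyp t ht
end

section
/- Let λ > 0 and let X be a positive random variable with E[X] < ∞. Then X has the exponential distribution with rate λ if and only if F_X(t) = λ·E[min{X, t}] for all t > 0. -/
open MeasureTheory Real Filter Set

-- exponential interval integral
lemma exp_int (l : ℝ) (t : ℝ) :
    ∫ x in (0:ℝ)..t, l * Real.exp (-(l * x)) = 1 - Real.exp (-(l * t)) := by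
  have h : ∀ x ∈ Set.uIcc (0:ℝ) t, HasDerivAt (fun x => -Real.exp (-(l * x)))
      (l * Real.exp (-(l * x))) x := by
    intro x _
    have h1 : HasDerivAt (fun x : ℝ => -(l * x)) (-l) x := by
      have := ((hasDerivAt_id x).const_mul l).neg; simp only [mul_one] at this; exact this
    have := (Real.hasDerivAt_exp (-(l * x))).comp x h1
    exact this.neg.congr_deriv (by ring)
  have hc : ContinuousOn (fun x => l * Real.exp (-(l * x))) (Set.uIcc 0 t) := by
    fun_prop
  have := intervalIntegral.integral_eq_sub_of_hasDerivAt h (hc.intervalIntegrable)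
  rw [this]
  simp [mul_zero]
  ring

lemma nu_Iic_nonpos (l : ℝ) {t : ℝ} (ht : t ≤ 0) :
    (volume.withDensity
      (fun x => ENNReal.ofReal (if 0 < x then l * Real.exp (-(l * x)) else 0))) (Iic t) = 0 := by
  rw [withDensity_apply _ measurableSet_Iic]
  rw [setLIntegral_congr_fun measurableSet_Iic (g := fun _ => 0)]
  · simp
  · intro x hx
    beta_reduce
    rw [if_neg (by linarith [mem_Iic.mp hx])]
    simp

lemma nu_Iic_pos (l : ℝ) (hl : 0 < l) {t : ℝ} (ht : 0 < t) :
    (volume.withDensity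
      (fun x => ENNReal.ofReal (if 0 < x then l * Real.exp (-(l * x)) else 0))) (Iic t) =
      ENNReal.ofReal (1 - Real.exp (-(l * t))) := by
  have hsplit : Iic t = Iic 0 ∪ Ioc 0 t := (Iic_union_Ioc_eq_Iic ht.le).symm
  rw [hsplit, measure_union (by simp [disjoint_left]; intro a ha h0; linarith) measurableSet_Ioc,
    nu_Iic_nonpos l le_rfl, zero_add, withDensity_apply _ measurableSet_Ioc]
  rw [setLIntegral_congr_fun measurableSet_Ioc
    (g := fun x => ENNReal.ofReal (l * Real.exp (-(l * x))))
    (by intro x hx; beta_reduce; rw [if_pos hx.1])]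
  rw [← ofReal_integral_eq_lintegral_ofReal]
  · rw [← intervalIntegral.integral_of_le ht.le, exp_int]
  · exact (Continuous.integrableOn_Ioc (by fun_prop))
  · filter_upwards with x
    positivity

lemma min_layercake {Ω : Type*} [MeasurableSpace Ω] (ℙ : Measure Ω) [IsProbabilityMeasure ℙ]
    (X : Ω → ℝ) (hX : Measurable X) (hXpos : ∀ᵐ ω ∂ℙ, 0 < X ω) (hXint : Integrable X ℙ)
    {t : ℝ} (ht : 0 < t) :
    ∫ ω, min (X ω) t ∂ℙ = ∫ s in (0:ℝ)..t, (ℙ {ω | s < X ω}).toReal := by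
  have hmin : Integrable (fun ω => min (X ω) t) ℙ := hXint.inf (integrable_const t)
  have hnn : 0 ≤ᵐ[ℙ] fun ω => min (X ω) t := by
    filter_upwards [hXpos] with ω hω
    exact le_min hω.le ht.le
  rw [hmin.integral_eq_integral_meas_lt hnn]
  have h1 : ∀ s ∈ Ioi (0:ℝ),
      (ℙ {a | s < min (X a) t}).toReal
        = (Iio t).indicator (fun s => (ℙ {ω | s < X ω}).toReal) s := by
    intro s _
    rcases lt_or_ge s t with h | h
    · rw [indicator_of_mem (mem_Iio.mpr h)]
      congr 2
      ext a
      simp [lt_min_iff, h]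
    · rw [indicator_of_notMem (by simpa using h)]
      have : {a | s < min (X a) t} = ∅ := by
        ext a
        simp only [mem_setOf_eq, mem_empty_iff_false, iff_false, not_lt, lt_min_iff, not_and]
        intro
        linarith
      rw [this]
      simp
  simp only [measureReal_def]
  rw [setIntegral_congr_fun measurableSet_Ioi h1, setIntegral_indicator measurableSet_Iio,
    Ioi_inter_Iio, ← integral_Ioc_eq_integral_Ioo, ← intervalIntegral.integral_of_le ht.le]

lemma ode_unique (l : ℝ) (hl : 0 < l) (g : ℝ → ℝ)
    (hg : Measurable g) (hg0 : ∀ s, 0 ≤ g s) (hg1 : ∀ s, g s ≤ 1)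
    (hrel : ∀ t > 0, 1 - g t = l * ∫ s in (0:ℝ)..t, g s) :
    ∀ t > 0, g t = Real.exp (-(l * t)) := by
  have hio : ∀ a b : ℝ, IntegrableOn g (Ioc a b) volume := by
    intro a b
    refine ⟨hg.aestronglyMeasurable.restrict, ?_⟩
    refine HasFiniteIntegral.restrict_of_bounded (C := 1) measure_Ioc_lt_top ?_
    filter_upwards with x
    rw [Real.norm_eq_abs, abs_le]
    exact ⟨by linarith [hg0 x], hg1 x⟩
  have hint : ∀ a b : ℝ, IntervalIntegrable g volume a b := fun a b => ⟨hio a b, hio b a⟩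
  set H : ℝ → ℝ := fun t => ∫ s in (0:ℝ)..t, g s with hH
  have Hcont : Continuous H := intervalIntegral.continuous_primitive hint 0
  have hgc : ∀ b > 0, ContinuousAt g b := by
    intro b hb
    have : (fun t => 1 - l * H t) =ᶠ[nhds b] g := by
      filter_upwards [isOpen_Ioi.mem_nhds hb] with t ht
      have := hrel t ht
      simp only [hH]
      linarith
    exact ContinuousAt.congr (by fun_prop) this
  have hder : ∀ b > 0, HasDerivAt H (g b) b := fun b hb =>
    intervalIntegral.integral_hasDerivAt_right (hint 0 b)
      (hg.stronglyMeasurable.stronglyMeasurableAtFilter) (hgc b hb)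
  set φ : ℝ → ℝ := fun t => Real.exp (l * t) * (1 - l * H t) with hφ
  have φcont : Continuous φ := by fun_prop
  have φder : ∀ b > 0, HasDerivAt φ 0 b := by
    intro b hb
    have h1 : HasDerivAt (fun t => Real.exp (l * t)) (Real.exp (l * b) * l) b :=
      (Real.hasDerivAt_exp (l * b)).comp b (by simpa using (hasDerivAt_id b).const_mul l)
    have h2 : HasDerivAt (fun t => 1 - l * H t) (-(l * g b)) b :=
      ((hder b hb).const_mul l).const_sub 1
    have hgb : g b = 1 - l * H b := by linarith [hrel b hb]
    exact (h1.mul h2).congr_deriv (by rw [← hgb]; ring)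
  have hconst : ∀ a b : ℝ, 0 < a → a ≤ b → φ b = φ a := by
    intro a b ha hab
    exact constant_of_has_deriv_right_zero (φcont.continuousOn)
      (fun x hx => (φder x (lt_of_lt_of_le ha hx.1)).hasDerivWithinAt) b ⟨hab, le_rfl⟩
  intro t ht
  have h0 : φ 0 = 1 := by simp [hφ, hH]
  have tend : Tendsto φ (nhdsWithin 0 (Ioi 0)) (nhds 1) := by
    rw [← h0]
    exact (φcont.tendsto 0).mono_left nhdsWithin_le_nhds
  have ev : φ =ᶠ[nhdsWithin 0 (Ioi (0:ℝ))] fun _ => φ t := by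
    filter_upwards [Ioc_mem_nhdsGT ht] with a ha
    exact (hconst a t ha.1 ha.2).symm
  have : φ t = 1 := (tendsto_nhds_unique (tend.congr' ev) tendsto_const_nhds).symm
  have hgt : g t = 1 - l * H t := by linarith [hrel t ht]
  have hexp := Real.exp_pos (l * t)
  rw [hφ] at this
  simp only at this
  rw [Real.exp_neg, hgt]
  field_simp
  linarith

theorem exponential_mean_min_characterization
    {Ω : Type*} [MeasurableSpace Ω] (ℙ : Measure Ω) [IsProbabilityMeasure ℙ]
    (X : Ω → ℝ) (hX : Measurable X) (hXpos : ∀ᵐ ω ∂ℙ, 0 < X ω)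
    (l : ℝ) (hl : 0 < l)
    (hXint : Integrable X ℙ) :
    Measure.map X ℙ = volume.withDensity
        (fun x => ENNReal.ofReal (if 0 < x then l * Real.exp (-(l * x)) else 0)) ↔
      ∀ t > 0, (ℙ {ω | X ω ≤ t}).toReal = l * ∫ ω, min (X ω) t ∂ℙ := by
  have hmapProb : IsProbabilityMeasure (Measure.map X ℙ) :=
    Measure.isProbabilityMeasure_map hX.aemeasurable
  have hIic : ∀ t : ℝ, ℙ {ω | X ω ≤ t} = Measure.map X ℙ (Iic t) := fun t =>
    (Measure.map_apply hX measurableSet_Iic).symm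
  have hIoi : ∀ s : ℝ, ℙ {ω | s < X ω} = Measure.map X ℙ (Ioi s) := fun s =>
    (Measure.map_apply hX measurableSet_Ioi).symm
  have hcompl : ∀ s : ℝ, (ℙ {ω | s < X ω}).toReal = 1 - (ℙ {ω | X ω ≤ s}).toReal := by
    intro s
    have hset : {ω | s < X ω} = {ω | X ω ≤ s}ᶜ := by ext ω; simp
    have hm : MeasurableSet {ω | X ω ≤ s} := hX measurableSet_Iic
    rw [hset, prob_compl_eq_one_sub hm,
      ENNReal.toReal_sub_of_le prob_le_one ENNReal.one_ne_top, ENNReal.toReal_one]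
  constructor
  · -- forward
    intro heq t ht
    have hexp_le : ∀ s : ℝ, 0 < s → Real.exp (-(l * s)) ≤ 1 := by
      intro s hs
      rw [Real.exp_le_one_iff]
      nlinarith
    have hcdf : ∀ s : ℝ, 0 < s → ℙ {ω | X ω ≤ s} = ENNReal.ofReal (1 - Real.exp (-(l * s))) := by
      intro s hs
      rw [hIic, heq, nu_Iic_pos l hl hs]
    have htail : ∀ s ∈ Ioc (0:ℝ) t, (ℙ {ω | s < X ω}).toReal = Real.exp (-(l * s)) := by
      intro s hs
      rw [hcompl, hcdf s hs.1, ENNReal.toReal_ofReal (by linarith [hexp_le s hs.1])]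
      ring
    rw [min_layercake ℙ X hX hXpos hXint ht, intervalIntegral.integral_of_le ht.le,
      setIntegral_congr_fun measurableSet_Ioc htail, ← intervalIntegral.integral_of_le ht.le,
      hcdf t ht, ENNReal.toReal_ofReal (by linarith [hexp_le t ht])]
    rw [← intervalIntegral.integral_const_mul, exp_int]
  · -- reverse
    intro h
    set g : ℝ → ℝ := fun s => (ℙ {ω | s < X ω}).toReal with hgdef
    have hganti : Antitone g := by
      intro s s' hss'
      exact ENNReal.toReal_mono (measure_ne_top _ _)
        (measure_mono (fun ω hω => lt_of_le_of_lt hss' hω))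
    have hg : Measurable g := hganti.measurable
    have hg0 : ∀ s, 0 ≤ g s := fun s => ENNReal.toReal_nonneg
    have hg1 : ∀ s, g s ≤ 1 := by
      intro s
      have := ENNReal.toReal_mono ENNReal.one_ne_top
        (prob_le_one (μ := ℙ) (s := {ω | s < X ω}))
      simpa using this
    have hrel : ∀ t > 0, 1 - g t = l * ∫ s in (0:ℝ)..t, g s := by
      intro t ht
      have h1 := h t ht
      rw [min_layercake ℙ X hX hXpos hXint ht] at h1
      have h2 := hcompl t
      simp only [hgdef] at *
      linarith
    have hode := ode_unique l hl g hg hg0 hg1 hrel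
    refine Measure.ext_of_Iic (Measure.map X ℙ) _ (fun a => ?_)
    rcases le_or_gt a 0 with ha | ha
    · rw [← hIic, nu_Iic_nonpos l ha]
      rw [ae_iff] at hXpos
      refine measure_mono_null (fun ω hω => ?_) hXpos
      simp only [mem_setOf_eq, not_lt] at *
      linarith
    · rw [← hIic, nu_Iic_pos l hl ha]
      have hcdf : (ℙ {ω | X ω ≤ a}).toReal = 1 - Real.exp (-(l * a)) := by
        have := hcompl a
        have := hode a ha
        simp only [hgdef] at *
        linarith
      rw [← ENNReal.ofReal_toReal (measure_ne_top ℙ _), hcdf]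
end

section
/- Let μ ∈ ℝ, σ > 0 and let X be a random variable with values in (μ, ∞) almost surely such that E[(X−μ)^{−1}] < ∞ and E[(X−μ)^{−2}] < ∞. Then X has the Lévy distribution with location μ and scale σ if and only if F_X(t) = (1/2)·E[(3/(X−μ) − σ/(X−μ)²)·(min{X, t} − μ)] for all t > μ. -/
open MeasureTheory Real Filter Set
open scoped NNReal ENNReal

noncomputable def levyPdf (μ σ : ℝ) (x : ℝ) : ℝ :=
  if μ < x then Real.sqrt (σ / (2 * π)) * (x - μ) ^ (-(3 : ℝ) / 2) *
    Real.exp (-(σ / (2 * (x - μ)))) else 0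

noncomputable def levyG (μ σ : ℝ) (x : ℝ) : ℝ := 3 / (x - μ) - σ / (x - μ) ^ 2

lemma levyPdf_nonneg (μ σ : ℝ) (x : ℝ) : 0 ≤ levyPdf μ σ x := by
  unfold levyPdf
  split_ifs with h
  · have : (0:ℝ) < x - μ := by linarith
    positivity
  · exact le_refl 0

lemma levyPdf_pos {μ σ : ℝ} (hσ : 0 < σ) {x : ℝ} (hx : μ < x) : 0 < levyPdf μ σ x := by
  unfold levyPdf
  rw [if_pos hx]
  have : 0 < x - μ := by linarith
  positivity

lemma levyPdf_meas (μ σ : ℝ) : Measurable (levyPdf μ σ) := by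
  unfold levyPdf
  exact Measurable.ite measurableSet_Ioi (by fun_prop) measurable_const

lemma levyG_meas (μ σ : ℝ) : Measurable (levyG μ σ) := by
  unfold levyG; fun_prop

lemma levyPdf_eventuallyEq {μ σ : ℝ} {x : ℝ} (hx : μ < x) :
    levyPdf μ σ =ᶠ[nhds x] (fun z => Real.sqrt (σ / (2 * π)) * (z - μ) ^ (-(3 : ℝ) / 2) *
      Real.exp (-(σ / 2) * (z - μ)⁻¹)) := by
  filter_upwards [Ioi_mem_nhds hx] with z hz
  have : -(σ / (2 * (z - μ))) = -(σ / 2) * (z - μ)⁻¹ := by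
    rw [div_mul_eq_div_div]; ring
  rw [levyPdf, if_pos (mem_Ioi.mp hz), this]

lemma levyPdf_hasDerivAt {μ σ : ℝ} {x : ℝ} (hx : μ < x) :
    HasDerivAt (levyPdf μ σ) (-(1 / 2) * levyG μ σ x * levyPdf μ σ x) x := by
  have hy : 0 < x - μ := sub_pos.2 hx
  set c := Real.sqrt (σ / (2 * π)) with hc
  have hA : HasDerivAt (fun z : ℝ => (z - μ) ^ (-(3 : ℝ) / 2))
      (1 * (-(3 : ℝ) / 2) * (x - μ) ^ (-(3 : ℝ) / 2 - 1)) x :=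
    ((hasDerivAt_id x).sub_const μ).rpow_const (Or.inl hy.ne')
  have hInv : HasDerivAt (fun z : ℝ => (z - μ)⁻¹) (-1 / (x - μ) ^ 2) x :=
    ((hasDerivAt_id x).sub_const μ).inv hy.ne'
  have hB : HasDerivAt (fun z : ℝ => Real.exp (-(σ / 2) * (z - μ)⁻¹))
      (Real.exp (-(σ / 2) * (x - μ)⁻¹) * (-(σ / 2) * (-1 / (x - μ) ^ 2))) x :=
    (hInv.const_mul (-(σ / 2))).exp
  have H := (hA.const_mul c).mul hB
  have H2 := H.congr_of_eventuallyEq (levyPdf_eventuallyEq hx)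
  refine H2.congr_deriv ?_
  symm
  have hsplit : (x - μ) ^ (-(3 : ℝ) / 2 - 1) = (x - μ) ^ (-(3 : ℝ) / 2) * (x - μ)⁻¹ := by
    rw [Real.rpow_sub hy, Real.rpow_one, div_eq_mul_inv]
  rw [levyPdf, if_pos hx, levyG, hsplit]
  have harg : -(σ / (2 * (x - μ))) = -(σ / 2) * (x - μ)⁻¹ := by
    rw [div_mul_eq_div_div]; ring
  rw [harg]
  have key : ∀ cc A E y : ℝ, y ≠ 0 →
      -(1 / 2) * (3 / y - σ / y ^ 2) * (cc * A * E) =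
        cc * (1 * (-(3 : ℝ) / 2) * (A * y⁻¹)) * E + cc * A * (E * (-(σ / 2) * (-1 / y ^ 2))) := by
    intro cc A E y hy0
    field_simp
    ring
  exact key c _ _ _ hy.ne'

lemma levyPdf_int_and_mass {μ σ : ℝ} (hσ : 0 < σ) :
    IntegrableOn (levyPdf μ σ) (Ioi μ) volume ∧ ∫ x in Ioi μ, levyPdf μ σ x = 1 := by
  have hσ2 : (0:ℝ) < σ / 2 := by linarith
  set c := Real.sqrt (σ / (2 * π)) with hc
  set f : ℝ → ℝ := fun u => μ + (σ / 2) * u⁻¹ with hf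
  set f' : ℝ → ℝ := fun u => (σ / 2) * (-(u ^ 2)⁻¹) with hf'
  have hderiv : ∀ u ∈ Ioi (0:ℝ), HasDerivWithinAt f (f' u) (Ioi 0) u := by
    intro u hu
    exact (((hasDerivAt_inv (ne_of_gt hu)).const_mul (σ / 2)).const_add μ).hasDerivWithinAt
  have hinj : InjOn f (Ioi 0) := by
    intro a ha b hb hab
    have h1 : (σ / 2) * a⁻¹ = (σ / 2) * b⁻¹ := by
      have := hab; simp only [hf] at this; linarith
    have h2 : a⁻¹ = b⁻¹ := mul_left_cancel₀ (ne_of_gt hσ2) h1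
    exact inv_injective h2
  have himg : f '' (Ioi 0) = Ioi μ := by
    ext x
    constructor
    · rintro ⟨u, hu, rfl⟩
      have hu0 : (0:ℝ) < u := hu
      have : 0 < (σ / 2) * u⁻¹ := by positivity
      simp only [hf, mem_Ioi]; linarith
    · intro hx
      have hx0 : (0:ℝ) < x - μ := sub_pos.2 hx
      refine ⟨(σ / 2) * (x - μ)⁻¹, by simp only [mem_Ioi]; positivity, ?_⟩
      simp only [hf]
      field_simp
      ring
  have key : ∀ u ∈ Ioi (0:ℝ), |f' u| • levyPdf μ σ (f u) =
      (c * (σ / 2) ^ (-(1:ℝ)/2)) * (Real.exp (-u) * u ^ ((1:ℝ)/2 - 1)) := by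
    intro u hu
    have hu0 : (0:ℝ) < u := hu
    have hgt : μ < f u := by
      have : 0 < (σ / 2) * u⁻¹ := by positivity
      simp only [hf]; linarith
    have habs : |f' u| = (σ / 2) * (u ^ 2)⁻¹ := by
      simp only [hf', mul_neg, abs_neg, abs_mul]
      rw [abs_of_pos hσ2, abs_of_pos (by positivity : (0:ℝ) < (u ^ 2)⁻¹)]
    have hsub : f u - μ = (σ / 2) * u⁻¹ := by simp only [hf]; ring
    have harg : -(σ / (2 * ((σ / 2) * u⁻¹))) = -u := by field_simp
    have hrpow : ((σ / 2) * u⁻¹) ^ (-(3:ℝ)/2) = (σ / 2) ^ (-(3:ℝ)/2) * u ^ ((3:ℝ)/2) := by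
      rw [Real.mul_rpow hσ2.le (inv_nonneg.2 hu0.le), Real.inv_rpow hu0.le,
        ← Real.rpow_neg hu0.le]
      norm_num
    rw [smul_eq_mul, habs, levyPdf, if_pos hgt, hsub, harg, hrpow]
    have e1 : (σ / 2) ^ (-(1:ℝ)/2) = (σ / 2) * (σ / 2) ^ (-(3:ℝ)/2) := by
      calc (σ / 2) ^ (-(1:ℝ)/2) = (σ / 2) ^ ((1:ℝ) + -(3:ℝ)/2) := by norm_num
        _ = (σ / 2) ^ (1:ℝ) * (σ / 2) ^ (-(3:ℝ)/2) := Real.rpow_add hσ2 _ _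
        _ = (σ / 2) * (σ / 2) ^ (-(3:ℝ)/2) := by rw [Real.rpow_one]
    have e2 : u ^ ((1:ℝ)/2 - 1) = u ^ ((3:ℝ)/2) * (u ^ 2)⁻¹ := by
      rw [← Real.rpow_natCast u 2, ← Real.rpow_neg hu0.le, ← Real.rpow_add hu0]
      norm_num
    rw [e1, e2]
    ring
  have hGamma := Real.GammaIntegral_convergent (by norm_num : (0:ℝ) < 1/2)
  have hmeasIoi : MeasurableSet (Ioi (0:ℝ)) := measurableSet_Ioi
  constructor
  · rw [← himg, integrableOn_image_iff_integrableOn_abs_deriv_smul hmeasIoi hderiv hinj]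
    exact IntegrableOn.congr_fun (hGamma.const_mul (c * (σ / 2) ^ (-(1:ℝ)/2)))
      (fun u hu => (key u hu).symm) hmeasIoi
  · rw [← himg, integral_image_eq_integral_abs_deriv_smul hmeasIoi hderiv hinj,
      setIntegral_congr_fun hmeasIoi key, integral_const_mul,
      ← Real.Gamma_eq_integral (by norm_num : (0:ℝ) < 1/2), Real.Gamma_one_half_eq]
    have hπ : (0:ℝ) < π := Real.pi_pos
    rw [hc, Real.sqrt_eq_rpow, Real.sqrt_eq_rpow,
      show (-(1:ℝ)/2) = -((1:ℝ)/2) by norm_num, Real.rpow_neg hσ2.le,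
      ← Real.inv_rpow hσ2.le, ← Real.mul_rpow (by positivity) (by positivity),
      ← Real.mul_rpow (by positivity) (by positivity)]
    rw [show σ / (2 * π) * (σ / 2)⁻¹ * π = 1 by field_simp]
    exact Real.one_rpow _

lemma levyPdf_integrableOn {μ σ : ℝ} (hσ : 0 < σ) {s : ℝ} (hs : μ ≤ s) :
    IntegrableOn (levyPdf μ σ) (Ioi s) volume :=
  ((levyPdf_int_and_mass hσ).1).mono_set (Ioi_subset_Ioi hs)

lemma levyPdf_tendsto_zero {μ σ : ℝ} : Tendsto (levyPdf μ σ) atTop (nhds 0) := by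
  set c := Real.sqrt (σ / (2 * π)) with hc
  have h1 : Tendsto (fun x : ℝ => x - μ) atTop atTop := tendsto_atTop_add_const_right _ _ tendsto_id
  have hA : Tendsto (fun x : ℝ => (x - μ) ^ (-(3:ℝ)/2)) atTop (nhds 0) := by
    have := (tendsto_rpow_neg_atTop (by norm_num : (0:ℝ) < 3/2)).comp h1
    simpa [neg_div, Function.comp_def] using this
  have hE : Tendsto (fun x : ℝ => Real.exp (-(σ / (2 * (x - μ))))) atTop (nhds 1) := by
    have h2 : Tendsto (fun x : ℝ => -(σ / (2 * (x - μ)))) atTop (nhds 0) := by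
      have h3 : Tendsto (fun x : ℝ => (x - μ)⁻¹) atTop (nhds 0) := h1.inv_tendsto_atTop
      have h4 : Tendsto (fun x : ℝ => -(σ / 2) * (x - μ)⁻¹) atTop (nhds (-(σ / 2) * 0)) :=
        h3.const_mul _
      simp only [mul_zero] at h4
      refine h4.congr (fun x => ?_)
      rw [div_mul_eq_div_div]; ring
    simpa [Function.comp_def] using (Real.continuous_exp.continuousAt.tendsto.comp h2)
  have hall : Tendsto (fun x : ℝ => c * (x - μ) ^ (-(3:ℝ)/2) *
      Real.exp (-(σ / (2 * (x - μ))))) atTop (nhds 0) := by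
    have := ((tendsto_const_nhds (x := c)).mul hA).mul hE
    simpa using this
  refine Tendsto.congr' ?_ hall
  filter_upwards [eventually_gt_atTop μ] with x hx
  rw [levyPdf, if_pos hx]

lemma levyPdf_tail_integral {μ σ : ℝ} (hσ : 0 < σ) {s : ℝ} (hs : μ < s) :
    ∫ x in Ioi s, (1/2) * levyG μ σ x * levyPdf μ σ x = levyPdf μ σ s := by
  set f' : ℝ → ℝ := fun x => -(1/2) * levyG μ σ x * levyPdf μ σ x with hf'
  have hys : 0 < s - μ := sub_pos.2 hs
  have hint : IntegrableOn f' (Ioi s) volume := by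
    have hp : IntegrableOn (levyPdf μ σ) (Ioi s) volume := levyPdf_integrableOn hσ hs.le
    set C : ℝ := (1/2) * (3 / (s - μ) + σ / (s - μ) ^ 2) with hC
    refine Integrable.mono' (hp.const_mul C) ?_ ?_
    · exact (((levyG_meas μ σ).const_mul _).mul (levyPdf_meas μ σ)).aestronglyMeasurable
    · refine (ae_restrict_iff' measurableSet_Ioi).2 (Filter.Eventually.of_forall fun x hx => ?_)
      have hyx : 0 < x - μ := by have := mem_Ioi.mp hx; linarith
      have hle : s - μ ≤ x - μ := by have := mem_Ioi.mp hx; linarith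
      have hgb : |levyG μ σ x| ≤ 3 / (s - μ) + σ / (s - μ) ^ 2 := by
        rw [levyG]
        refine (abs_sub _ _).trans ?_
        gcongr
        · rw [abs_of_nonneg (by positivity)]
          gcongr
        · rw [abs_of_nonneg (by positivity)]
          gcongr
      have hpn := levyPdf_nonneg μ σ x
      rw [hf']
      calc ‖-(1/2) * levyG μ σ x * levyPdf μ σ x‖
          = (1/2) * |levyG μ σ x| * levyPdf μ σ x := by
            rw [norm_eq_abs, abs_mul, abs_mul, abs_of_nonneg hpn]
            norm_num
        _ ≤ (1/2) * (3 / (s - μ) + σ / (s - μ) ^ 2) * levyPdf μ σ x := by gcongr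
        _ = C * levyPdf μ σ x := by rw [hC]
  have hFTC := integral_Ioi_of_hasDerivAt_of_tendsto
    (f := levyPdf μ σ) (f' := f') (a := s)
    ((levyPdf_hasDerivAt hs).continuousAt.continuousWithinAt)
    (fun x hx => levyPdf_hasDerivAt (lt_trans hs (mem_Ioi.mp hx)))
    hint levyPdf_tendsto_zero
  have : (fun x => (1/2) * levyG μ σ x * levyPdf μ σ x) = fun x => -(f' x) := by
    funext x; rw [hf']; ring
  rw [this, integral_neg, hFTC]
  ring

lemma integral_ind_min {μ t x : ℝ} (ht : μ < t) (hx : μ < x) :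
    (∫ s in Ioc μ t, (if s < x then (1:ℝ) else 0)) = min x t - μ := by
  have heq : ∀ s : ℝ, (if s < x then (1:ℝ) else 0) = (Iio x).indicator (fun _ => (1:ℝ)) s := by
    intro s; simp [indicator, mem_Iio]
  simp_rw [heq]
  rw [setIntegral_indicator measurableSet_Iio, setIntegral_const, smul_eq_mul, mul_one]
  rcases le_or_gt x t with hxt | htx
  · have hset : Ioc μ t ∩ Iio x = Ioo μ x := by
      ext s
      simp only [mem_inter_iff, mem_Ioc, mem_Iio, mem_Ioo]
      constructor
      · rintro ⟨⟨h1, _⟩, h3⟩; exact ⟨h1, h3⟩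
      · rintro ⟨h1, h3⟩; exact ⟨⟨h1, by linarith⟩, h3⟩
    rw [hset, measureReal_def, Real.volume_Ioo, ENNReal.toReal_ofReal (by linarith), min_eq_left hxt]
  · have hset : Ioc μ t ∩ Iio x = Ioc μ t := by
      refine inter_eq_left.2 (fun s hs => ?_)
      have := hs.2
      exact mem_Iio.2 (by linarith)
    rw [hset, measureReal_def, Real.volume_Ioc, ENNReal.toReal_ofReal (by linarith), min_eq_right htx.le]

lemma fubini_min {μ σ : ℝ} (ν : Measure ℝ) [IsFiniteMeasure ν]
    (hae : ∀ᵐ x ∂ν, μ < x) (hg : Integrable (levyG μ σ) ν) {t : ℝ} (ht : μ < t) :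
    ∫ x, levyG μ σ x * (min x t - μ) ∂ν
      = ∫ s in Ioc μ t, (∫ x in Ioi s, levyG μ σ x ∂ν) := by
  set F : ℝ × ℝ → ℝ := fun p => if p.2 < p.1 then levyG μ σ p.1 else 0 with hF
  have hFmeas : Measurable F := by
    refine Measurable.ite (measurableSet_lt measurable_snd measurable_fst) ?_ measurable_const
    exact (levyG_meas μ σ).comp measurable_fst
  have hprod : Integrable F (ν.prod (volume.restrict (Ioc μ t))) := by
    rw [integrable_prod_iff hFmeas.aestronglyMeasurable]
    constructor
    · refine Filter.Eventually.of_forall (fun x => ?_)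
      have : (fun s => F (x, s)) = fun s => (Iio x).indicator (fun _ => levyG μ σ x) s := by
        funext s; simp [hF, indicator, mem_Iio]
      rw [this]
      exact (integrable_const _).indicator measurableSet_Iio
    · refine Integrable.mono' ((hg.norm).const_mul (t - μ)) ?_ ?_
      · exact (hFmeas.norm.stronglyMeasurable.integral_prod_right').aestronglyMeasurable
      · refine Filter.Eventually.of_forall (fun x => ?_)
        have h1 : ∀ s, ‖F (x, s)‖ ≤ ‖levyG μ σ x‖ := by
          intro s
          simp only [hF]
          split_ifs
          · exact le_refl _
          · simp [norm_nonneg]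
        calc ‖∫ s in Ioc μ t, ‖F (x, s)‖‖
            ≤ ∫ s in Ioc μ t, ‖levyG μ σ x‖ := by
              rw [Real.norm_eq_abs, abs_of_nonneg (integral_nonneg (fun s => norm_nonneg _))]
              refine integral_mono_of_nonneg (Filter.Eventually.of_forall (fun s => norm_nonneg _))
                (integrable_const _) (Filter.Eventually.of_forall h1)
          _ = (volume (Ioc μ t)).toReal * ‖levyG μ σ x‖ := by
              rw [setIntegral_const, smul_eq_mul, measureReal_def]
          _ ≤ (t - μ) * ‖levyG μ σ x‖ := by
              rw [Real.volume_Ioc, ENNReal.toReal_ofReal (by linarith)]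
  have hswap := integral_integral_swap (f := fun x s => F (x, s))
    (μ := ν) (ν := volume.restrict (Ioc μ t)) hprod
  have hLHS : ∫ x, levyG μ σ x * (min x t - μ) ∂ν
      = ∫ x, (∫ s in Ioc μ t, F (x, s)) ∂ν := by
    refine integral_congr_ae ?_
    filter_upwards [hae] with x hx
    have : (∫ s in Ioc μ t, F (x, s)) = ∫ s in Ioc μ t, levyG μ σ x * (if s < x then (1:ℝ) else 0) := by
      refine integral_congr_ae (Filter.Eventually.of_forall (fun s => ?_))
      simp only [hF]
      split_ifs <;> ring
    rw [this, integral_const_mul, integral_ind_min ht hx]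
  rw [hLHS, hswap]
  refine setIntegral_congr_fun measurableSet_Ioc (fun s _ => ?_)
  have : (fun x => F (x, s)) = (Ioi s).indicator (levyG μ σ) := by
    funext x; simp [hF, indicator, mem_Ioi]
  rw [this, integral_indicator measurableSet_Ioi]

noncomputable def levyM (μ σ : ℝ) : Measure ℝ :=
  volume.withDensity (fun x => ENNReal.ofReal (levyPdf μ σ x))

lemma levyM_Iic_le {μ σ u : ℝ} (hu : u ≤ μ) : levyM μ σ (Iic u) = 0 := by
  rw [levyM, withDensity_apply _ measurableSet_Iic]
  have : ∀ x ∈ Iic u, ENNReal.ofReal (levyPdf μ σ x) = 0 := by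
    intro x hx
    rw [levyPdf, if_neg (by simp only [not_lt]; exact le_trans (mem_Iic.mp hx) hu)]
    simp
  calc ∫⁻ x in Iic u, ENNReal.ofReal (levyPdf μ σ x)
      = ∫⁻ x in Iic u, 0 := setLIntegral_congr_fun measurableSet_Iic
        this
    _ = 0 := lintegral_zero

lemma levyM_Iic {μ σ : ℝ} (hσ : 0 < σ) {t : ℝ} (ht : μ < t) :
    levyM μ σ (Iic t) = ENNReal.ofReal (∫ x in Ioc μ t, levyPdf μ σ x) := by
  rw [levyM, withDensity_apply _ measurableSet_Iic]
  have hsplit : Iic t = Iic μ ∪ Ioc μ t := (Iic_union_Ioc_eq_Iic ht.le).symm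
  rw [hsplit, lintegral_union measurableSet_Ioc (Iic_disjoint_Ioc le_rfl)]
  have h0 : ∫⁻ x in Iic μ, ENNReal.ofReal (levyPdf μ σ x) = 0 := by
    have := levyM_Iic_le (μ := μ) (σ := σ) (le_refl μ)
    rwa [levyM, withDensity_apply _ measurableSet_Iic] at this
  rw [h0, zero_add]
  rw [← ofReal_integral_eq_lintegral_ofReal
    (((levyPdf_int_and_mass hσ).1).mono_set Ioc_subset_Ioi_self)
    (Filter.Eventually.of_forall (fun x => levyPdf_nonneg μ σ x))]

lemma levyM_isProb {μ σ : ℝ} (hσ : 0 < σ) : IsProbabilityMeasure (levyM μ σ) := by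
  constructor
  rw [levyM, withDensity_apply _ MeasurableSet.univ]
  have hsplit : (univ : Set ℝ) = Iic μ ∪ Ioi μ := (Iic_union_Ioi).symm
  rw [show volume.restrict (univ : Set ℝ) = volume.restrict (Iic μ ∪ Ioi μ) by rw [← hsplit],
    lintegral_union measurableSet_Ioi (Iic_disjoint_Ioi le_rfl)]
  have h0 : ∫⁻ x in Iic μ, ENNReal.ofReal (levyPdf μ σ x) = 0 := by
    have := levyM_Iic_le (μ := μ) (σ := σ) (le_refl μ)
    rwa [levyM, withDensity_apply _ measurableSet_Iic] at this
  rw [h0, zero_add, ← ofReal_integral_eq_lintegral_ofReal (levyPdf_int_and_mass hσ).1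
    (Filter.Eventually.of_forall (fun x => levyPdf_nonneg μ σ x)),
    (levyPdf_int_and_mass hσ).2]
  simp

lemma levyM_ae_gt {μ σ : ℝ} : ∀ᵐ x ∂(levyM μ σ), μ < x := by
  rw [ae_iff]
  have : {x : ℝ | ¬ μ < x} = Iic μ := by ext x; simp [not_lt]
  rw [this]
  exact levyM_Iic_le le_rfl

lemma levyM_setIntegral (μ σ : ℝ) (s : ℝ) (g : ℝ → ℝ) :
    ∫ x in Ioi s, g x ∂(levyM μ σ) = ∫ x in Ioi s, g x * levyPdf μ σ x := by
  rw [levyM, restrict_withDensity measurableSet_Ioi]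
  have hd : (fun x => ENNReal.ofReal (levyPdf μ σ x))
      = fun x => ((levyPdf μ σ x).toNNReal : ENNReal) := rfl
  rw [hd, integral_withDensity_eq_integral_smul (levyPdf_meas μ σ).real_toNNReal]
  refine integral_congr_ae (Filter.Eventually.of_forall (fun x => ?_))
  simp only [NNReal.smul_def, smul_eq_mul, Real.coe_toNNReal _ (levyPdf_nonneg μ σ x), mul_comm]

lemma levyG_abs_le {μ σ a : ℝ} (hσ : 0 < σ) (ha : μ < a) {x : ℝ} (hx : a ≤ x) :
    |levyG μ σ x| ≤ 3 / (a - μ) + σ / (a - μ) ^ 2 := by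
  have hya : 0 < a - μ := sub_pos.2 ha
  have hyx : 0 < x - μ := by linarith
  have hle : a - μ ≤ x - μ := by linarith
  rw [levyG]
  refine (abs_sub _ _).trans ?_
  gcongr
  · rw [abs_of_nonneg (by positivity)]
    gcongr
  · rw [abs_of_nonneg (by positivity)]
    gcongr

lemma levyG_contAt {μ σ : ℝ} {x : ℝ} (hx : μ < x) : ContinuousAt (levyG μ σ) x := by
  have h1 : x - μ ≠ 0 := sub_ne_zero.2 hx.ne'
  unfold levyG
  exact ContinuousAt.sub
    (ContinuousAt.div continuousAt_const ((continuous_id.sub continuous_const).continuousAt) h1)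
    (ContinuousAt.div continuousAt_const
      (((continuous_id.sub continuous_const).pow 2).continuousAt) (pow_ne_zero 2 h1))

lemma levy_backward {μ σ : ℝ} (hσ : 0 < σ) (ν : Measure ℝ) [IsProbabilityMeasure ν]
    (hae : ∀ᵐ x ∂ν, μ < x) (hg : Integrable (levyG μ σ) ν)
    (hfix : ∀ t, μ < t → (ν (Iic t)).toReal
      = (1 / 2) * ∫ x, levyG μ σ x * (min x t - μ) ∂ν) :
    ν = levyM μ σ := by
  classical
  set H : ℝ → ℝ := fun s => ∫ x in Ioi s, levyG μ σ x ∂ν with hHdef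
  set D : ℝ → ℝ := fun s => (1 / 2) * H s with hDdef
  set C : ℝ := ∫ x, ‖levyG μ σ x‖ ∂ν with hCdef
  have hC0 : 0 ≤ C := integral_nonneg (fun x => norm_nonneg _)
  have Hbd : ∀ s, ‖H s‖ ≤ C := by
    intro s
    calc ‖H s‖ ≤ ∫ x in Ioi s, ‖levyG μ σ x‖ ∂ν := norm_integral_le_integral_norm _
      _ ≤ C := setIntegral_le_integral hg.norm
        (Filter.Eventually.of_forall (fun x => norm_nonneg _))
  have HmeasS : StronglyMeasurable H := by
    have hF : Measurable (fun p : ℝ × ℝ => if p.1 < p.2 then levyG μ σ p.2 else 0) := by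
      refine Measurable.ite (measurableSet_lt measurable_fst measurable_snd) ?_ measurable_const
      exact (levyG_meas μ σ).comp measurable_snd
    have := hF.stronglyMeasurable.integral_prod_right' (ν := ν)
    convert this using 1
    funext s
    show (∫ x in Ioi s, levyG μ σ x ∂ν) = _
    rw [← integral_indicator measurableSet_Ioi]
    refine integral_congr_ae (Filter.Eventually.of_forall (fun x => ?_))
    simp [indicator, mem_Ioi]
  have Hmeas : Measurable H := HmeasS.measurable
  have Dmeas : Measurable D := Hmeas.const_mul _
  have HintOn : ∀ a b : ℝ, IntegrableOn H (Ioc a b) volume := by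
    intro a b
    exact Integrable.mono' (integrable_const C) HmeasS.aestronglyMeasurable.restrict
      (Filter.Eventually.of_forall Hbd)
  have DintOn : ∀ a b : ℝ, IntegrableOn D (Ioc a b) volume := by
    intro a b
    exact (HintOn a b).const_mul _
  have key0 : ∀ t, μ < t → (ν (Iic t)).toReal = ∫ s in Ioc μ t, D s := by
    intro t ht
    rw [hfix t ht, fubini_min ν hae hg ht, ← integral_const_mul]
  have key1 : ∀ a b, μ < a → a ≤ b → (ν (Ioc a b)).toReal = ∫ s in Ioc a b, D s := by
    intro a b ha hab
    have h1 := key0 a ha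
    have h2 := key0 b (lt_of_lt_of_le ha hab)
    have hsplit : ∫ s in Ioc μ b, D s = (∫ s in Ioc μ a, D s) + ∫ s in Ioc a b, D s := by
      rw [← setIntegral_union (Ioc_disjoint_Ioc_of_le le_rfl) measurableSet_Ioc (DintOn μ a) (DintOn a b),
        Ioc_union_Ioc_eq_Ioc ha.le hab]
    have hν' : ν (Ioc a b) = ν (Iic b) - ν (Iic a) := by
      rw [← Iic_sdiff_Iic, measure_diff (Iic_subset_Iic.2 hab) nullMeasurableSet_Iic
        (measure_ne_top ν _)]
    rw [hν', ENNReal.toReal_sub_of_le (measure_mono (Iic_subset_Iic.2 hab))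
      (measure_ne_top ν _), h1, h2, hsplit]
    ring
  have hDg : ∀ a b : ℝ, μ < a → IntegrableOn (fun s => D s * levyG μ σ s) (Icc a b) volume := by
    intro a b ha
    set B : ℝ := 3 / (a - μ) + σ / (a - μ) ^ 2 with hBdef
    refine Integrable.mono' (integrable_const (C * B))
      ((Dmeas.mul (levyG_meas μ σ)).aestronglyMeasurable.restrict) ?_
    refine (ae_restrict_iff' measurableSet_Icc).2 (Filter.Eventually.of_forall (fun s hs => ?_))
    have hgb : |levyG μ σ s| ≤ B := levyG_abs_le hσ ha hs.1
    have hDb : |D s| ≤ C := by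
      rw [hDdef]
      simp only
      rw [abs_mul]
      calc |1 / 2| * |H s| ≤ 1 * |H s| := by
            refine mul_le_mul_of_nonneg_right ?_ (abs_nonneg _)
            rw [abs_of_nonneg (by norm_num : (0:ℝ) ≤ 1/2)]; norm_num
        _ = |H s| := one_mul _
        _ ≤ C := Hbd s
    calc ‖D s * levyG μ σ s‖ = |D s| * |levyG μ σ s| := abs_mul _ _
      _ ≤ C * B := mul_le_mul hDb hgb (abs_nonneg _) hC0
  have Dabs : ∀ s, |D s| ≤ C := by
    intro s
    have h2 := Hbd s
    rw [Real.norm_eq_abs] at h2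
    rw [hDdef]
    simp only
    rw [abs_mul, abs_of_nonneg (show (0:ℝ) ≤ 1/2 by norm_num)]
    have := abs_nonneg (H s)
    linarith
  have key2 : ∀ a b, μ < a → a ≤ b →
      ∫ x in Ioc a b, levyG μ σ x ∂ν = ∫ s in Ioc a b, D s * levyG μ σ s := by
    intro a b ha hab
    set B : ℝ := 3 / (a - μ) + σ / (a - μ) ^ 2 with hBdef
    set Dp : ℝ → ℝ≥0 := fun s => (D s).toNNReal with hDp
    set Dm : ℝ → ℝ≥0 := fun s => (-(D s)).toNNReal with hDm
    have Dpmeas : Measurable Dp := Dmeas.real_toNNReal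
    have Dmmeas : Measurable Dm := Dmeas.neg.real_toNNReal
    set lr : Measure ℝ := volume.restrict (Ioc a b) with hlr
    set lam2 : Measure ℝ := lr.withDensity (fun s => (Dp s : ℝ≥0∞)) with hlam2
    set lam3 : Measure ℝ := lr.withDensity (fun s => (Dm s : ℝ≥0∞)) with hlam3
    have hDpC : ∀ s, ((Dp s : ℝ≥0) : ℝ) ≤ C := by
      intro s
      rw [hDp]
      simp only [Real.coe_toNNReal']
      exact max_le (le_trans (le_abs_self _) (Dabs s)) hC0
    have hDmC : ∀ s, ((Dm s : ℝ≥0) : ℝ) ≤ C := by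
      intro s
      rw [hDm]
      simp only [Real.coe_toNNReal']
      exact max_le (le_trans (neg_le_abs _) (Dabs s)) hC0
    have hfin : ∀ (E : ℝ → ℝ≥0), (∀ s, (E s : ℝ) ≤ C) →
        IsFiniteMeasure (lr.withDensity (fun s => (E s : ℝ≥0∞))) := by
      intro E hE
      constructor
      rw [withDensity_apply _ MeasurableSet.univ, Measure.restrict_univ]
      calc ∫⁻ s, (E s : ℝ≥0∞) ∂lr ≤ ∫⁻ _, ENNReal.ofReal C ∂lr := by
            refine lintegral_mono (fun s => ?_)
            rw [← ENNReal.ofReal_coe_nnreal]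
            exact ENNReal.ofReal_le_ofReal (hE s)
        _ = ENNReal.ofReal C * lr univ := by rw [lintegral_const]
        _ < ⊤ := ENNReal.mul_lt_top ENNReal.ofReal_lt_top
            (by rw [hlr, Measure.restrict_apply_univ]; exact measure_Ioc_lt_top)
    haveI hf2 : IsFiniteMeasure lam2 := hfin Dp hDpC
    haveI hf3 : IsFiniteMeasure lam3 := hfin Dm hDmC
    have hIicInter : ∀ u : ℝ, Iic u ∩ Ioc a b = Ioc a (min u b) := by
      intro u
      ext s
      simp only [mem_inter_iff, mem_Iic, mem_Ioc, le_min_iff]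
      constructor
      · rintro ⟨h1, h2, h3⟩; exact ⟨h2, h1, h3⟩
      · rintro ⟨h2, h1, h3⟩; exact ⟨h1, h2, h3⟩
    have happly : ∀ (E : ℝ → ℝ≥0) (u : ℝ), Measurable E →
        (lr.withDensity (fun s => (E s : ℝ≥0∞))) (Iic u)
          = ∫⁻ s in Ioc a (min u b), (E s : ℝ≥0∞) := by
      intro E u hE
      rw [withDensity_apply _ measurableSet_Iic, hlr, Measure.restrict_restrict
        measurableSet_Iic, hIicInter u]
    have hcoeP : ∀ s, ((Dp s : ℝ≥0) : ℝ≥0∞) = ENNReal.ofReal (max (D s) 0) := by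
      intro s
      rw [show max (D s) 0 = ((Dp s : ℝ≥0) : ℝ) from (Real.coe_toNNReal' _).symm,
        ENNReal.ofReal_coe_nnreal]
    have hcoeM : ∀ s, ((Dm s : ℝ≥0) : ℝ≥0∞) = ENNReal.ofReal (max (-(D s)) 0) := by
      intro s
      rw [show max (-(D s)) 0 = ((Dm s : ℝ≥0) : ℝ) from (Real.coe_toNNReal' _).symm,
        ENNReal.ofReal_coe_nnreal]
    have hposint : ∀ u : ℝ, IntegrableOn (fun s => max (D s) 0) (Ioc a (min u b)) volume :=
      fun u => ((DintOn a (min u b)).pos_part)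
    have hnegint : ∀ u : ℝ, IntegrableOn (fun s => max (-(D s)) 0) (Ioc a (min u b)) volume :=
      fun u => (((DintOn a (min u b)).neg).pos_part)
    have hsum : lam2 = ν.restrict (Ioc a b) + lam3 := by
      refine Measure.ext_of_Iic _ _ (fun u => ?_)
      rw [Measure.add_apply, happly Dp u Dpmeas, happly Dm u Dmmeas,
        Measure.restrict_apply measurableSet_Iic, hIicInter u]
      rcases le_or_gt u a with hua | hau
      · have hemp : Ioc a (min u b) = ∅ := Ioc_eq_empty (by
          simp only [not_lt]
          exact le_trans (min_le_left _ _) hua)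
        rw [hemp]
        simp
      · have hamin : a ≤ min u b := le_min hau.le hab
        have e2 : ∫⁻ s in Ioc a (min u b), ((Dp s : ℝ≥0) : ℝ≥0∞)
            = ENNReal.ofReal (∫ s in Ioc a (min u b), max (D s) 0) := by
          simp_rw [hcoeP]
          rw [← ofReal_integral_eq_lintegral_ofReal (hposint u)
            (Filter.Eventually.of_forall (fun s => le_max_right _ _))]
        have e3 : ∫⁻ s in Ioc a (min u b), ((Dm s : ℝ≥0) : ℝ≥0∞)
            = ENNReal.ofReal (∫ s in Ioc a (min u b), max (-(D s)) 0) := by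
          simp_rw [hcoeM]
          rw [← ofReal_integral_eq_lintegral_ofReal (hnegint u)
            (Filter.Eventually.of_forall (fun s => le_max_right _ _))]
        have e1 : ν (Ioc a (min u b)) = ENNReal.ofReal (∫ s in Ioc a (min u b), D s) := by
          rw [← ENNReal.ofReal_toReal (measure_ne_top ν (Ioc a (min u b))),
            key1 a (min u b) ha hamin]
        have hptw : ∀ s : ℝ, max (D s) 0 = D s + max (-(D s)) 0 := by
          intro s
          rcases le_total 0 (D s) with h | h
          · rw [max_eq_left h, max_eq_right (neg_nonpos.mpr h)]; ring
          · rw [max_eq_right h, max_eq_left (neg_nonneg.mpr h)]; ring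
        have hsum' : ∫ s in Ioc a (min u b), max (D s) 0
            = (∫ s in Ioc a (min u b), D s) + ∫ s in Ioc a (min u b), max (-(D s)) 0 := by
          rw [← integral_add (DintOn a (min u b)) (hnegint u)]
          exact integral_congr_ae (Filter.Eventually.of_forall (fun s => hptw s))
        have hnn1 : 0 ≤ ∫ s in Ioc a (min u b), D s := by
          rw [← key1 a (min u b) ha hamin]
          exact ENNReal.toReal_nonneg
        have hnn2 : 0 ≤ ∫ s in Ioc a (min u b), max (-(D s)) 0 :=
          integral_nonneg (fun s => le_max_right _ _)
        rw [e1, e2, e3, hsum', ENNReal.ofReal_add hnn1 hnn2]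
    have hsmulint : ∀ (E : ℝ → ℝ≥0), Measurable E → (∀ s, (E s : ℝ) ≤ C) →
        Integrable (fun s => E s • levyG μ σ s) lr := by
      intro E hE hEC
      have heq : (fun s => E s • levyG μ σ s) = fun s => ((E s : ℝ)) * levyG μ σ s := by
        funext s; rw [NNReal.smul_def, smul_eq_mul]
      rw [heq]
      refine Integrable.mono' (integrable_const (C * B)) ?_ ?_
      · exact ((hE.coe_nnreal_real.mul (levyG_meas μ σ)).aestronglyMeasurable).restrict
      · refine (ae_restrict_iff' measurableSet_Ioc).2
          (Filter.Eventually.of_forall (fun s hs => ?_))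
        calc ‖(E s : ℝ) * levyG μ σ s‖ = (E s : ℝ) * |levyG μ σ s| := by
              rw [norm_mul, Real.norm_eq_abs, Real.norm_eq_abs,
                abs_of_nonneg (E s).coe_nonneg]
          _ ≤ C * B := mul_le_mul (hEC s) (levyG_abs_le hσ ha hs.1.le)
              (abs_nonneg _) hC0
    have intsm2 : Integrable (fun s => Dp s • levyG μ σ s) lr := hsmulint Dp Dpmeas hDpC
    have intsm3 : Integrable (fun s => Dm s • levyG μ σ s) lr := hsmulint Dm Dmmeas hDmC
    have int1 : Integrable (levyG μ σ) (ν.restrict (Ioc a b)) := hg.restrict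
    have int3 : Integrable (levyG μ σ) lam3 :=
      (integrable_withDensity_iff_integrable_smul Dmmeas).2 intsm3
    have hIq : ∫ s, (Dp s) • levyG μ σ s ∂lr
        = (∫ x in Ioc a b, levyG μ σ x ∂ν) + ∫ s, (Dm s) • levyG μ σ s ∂lr := by
      rw [← integral_withDensity_eq_integral_smul Dpmeas,
        ← integral_withDensity_eq_integral_smul Dmmeas, ← hlam2, ← hlam3, hsum,
        integral_add_measure int1 int3]
    have hfinal : (∫ s, (Dp s) • levyG μ σ s ∂lr) - ∫ s, (Dm s) • levyG μ σ s ∂lr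
        = ∫ s in Ioc a b, D s * levyG μ σ s := by
      rw [← integral_sub intsm2 intsm3]
      refine integral_congr_ae (Filter.Eventually.of_forall (fun s => ?_))
      simp only [NNReal.smul_def, smul_eq_mul, hDp, hDm, Real.coe_toNNReal']
      rcases le_total 0 (D s) with h | h
      · rw [max_eq_left h, max_eq_right (neg_nonpos.mpr h)]; ring
      · rw [max_eq_right h, max_eq_left (neg_nonneg.mpr h)]; ring
    linarith [hIq, hfinal]
  have key3 : ∀ a b, μ < a → a ≤ b → H b = H a - ∫ s in Ioc a b, D s * levyG μ σ s := by
    intro a b ha hab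
    have hu : Ioc a b ∪ Ioi b = Ioi a := Ioc_union_Ioi_eq_Ioi hab
    have hsplit : H a = (∫ x in Ioc a b, levyG μ σ x ∂ν) + H b := by
      rw [hHdef]
      simp only
      rw [← hu, setIntegral_union ((Iic_disjoint_Ioi le_rfl).mono_left Ioc_subset_Iic_self)
        measurableSet_Ioi hg.integrableOn hg.integrableOn]
    rw [hsplit, key2 a b ha hab]
    ring
  have contH : ∀ s₀, μ < s₀ → ContinuousAt H s₀ := by
    intro s₀ hs₀
    set a : ℝ := (μ + s₀) / 2 with hadef
    have ha1 : μ < a := by rw [hadef]; linarith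
    have ha2 : a < s₀ := by rw [hadef]; linarith
    set b : ℝ := s₀ + 1 with hbdef
    have hcont : ContinuousOn (fun x => ∫ u in Ioc a x, D u * levyG μ σ u) (Icc a b) :=
      intervalIntegral.continuousOn_primitive (hDg a b ha1)
    have hcontAt : ContinuousAt (fun x => H a - ∫ u in Ioc a x, D u * levyG μ σ u) s₀ := by
      refine ContinuousAt.sub continuousAt_const ?_
      refine hcont.continuousAt (Icc_mem_nhds ha2 (by rw [hbdef]; linarith))
    refine hcontAt.congr ?_
    filter_upwards [Ioi_mem_nhds ha2] with x hx
    rw [key3 a x ha1 (le_of_lt hx)]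
  have derivH : ∀ s₀, μ < s₀ → HasDerivAt H (-(D s₀ * levyG μ σ s₀)) s₀ := by
    intro s₀ hs₀
    set a : ℝ := (μ + s₀) / 2 with hadef
    have ha1 : μ < a := by rw [hadef]; linarith
    have ha2 : a < s₀ := by rw [hadef]; linarith
    have hii : IntervalIntegrable (fun u => D u * levyG μ σ u) volume a s₀ := by
      rw [intervalIntegrable_iff, uIoc_of_le ha2.le]
      exact (hDg a s₀ ha1).mono_set Ioc_subset_Icc_self
    have hDgcontAt : ContinuousAt (fun u => D u * levyG μ σ u) s₀ := by
      refine ContinuousAt.mul ?_ (levyG_contAt hs₀)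
      exact (continuousAt_const.mul (contH s₀ hs₀))
    have hprim : HasDerivAt (fun x => ∫ u in a..x, D u * levyG μ σ u)
        (D s₀ * levyG μ σ s₀) s₀ :=
      intervalIntegral.integral_hasDerivAt_right hii
        ((Dmeas.mul (levyG_meas μ σ)).stronglyMeasurable.stronglyMeasurableAtFilter)
        hDgcontAt
    have hD : HasDerivAt (fun x => H a - ∫ u in a..x, D u * levyG μ σ u)
        (-(D s₀ * levyG μ σ s₀)) s₀ := by
      simpa using (hprim.const_sub (H a))
    refine hD.congr_of_eventuallyEq ?_
    filter_upwards [Ioi_mem_nhds ha2] with x hx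
    rw [key3 a x ha1 (le_of_lt hx), intervalIntegral.integral_of_le (le_of_lt hx)]
  set r : ℝ → ℝ := fun s => H s / levyPdf μ σ s with hrdef
  have hr : ∀ s₀, μ < s₀ → HasDerivAt r 0 s₀ := by
    intro s₀ hs₀
    have hp := levyPdf_hasDerivAt (μ := μ) (σ := σ) hs₀
    have hpne : levyPdf μ σ s₀ ≠ 0 := (levyPdf_pos hσ hs₀).ne'
    have hH := derivH s₀ hs₀
    have hdiv := hH.div hp hpne
    refine hdiv.congr_deriv ?_
    symm
    rw [eq_comm, div_eq_zero_iff]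
    left
    rw [hDdef]
    simp only
    ring
  have hconst : ∀ s₁ s₂, μ < s₁ → s₁ ≤ s₂ → r s₁ = r s₂ := by
    intro s₁ s₂ h1 h12
    have hcont : ContinuousOn r (Icc s₁ s₂) := fun x hx =>
      ((hr x (lt_of_lt_of_le h1 hx.1)).continuousAt).continuousWithinAt
    have hderiv : ∀ x ∈ Ico s₁ s₂, HasDerivWithinAt r 0 (Ici x) x := fun x hx =>
      ((hr x (lt_of_lt_of_le h1 hx.1)).hasDerivWithinAt)
    exact (constant_of_has_deriv_right_zero hcont hderiv s₂ (right_mem_Icc.2 h12)).symm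
  set K : ℝ := r (μ + 1) with hKdef
  have hKp : ∀ s, μ < s → H s = K * levyPdf μ σ s := by
    intro s hs
    have hrr : r s = K := by
      rw [hKdef]
      rcases le_total s (μ + 1) with h | h
      · exact hconst s (μ + 1) hs h
      · exact (hconst (μ + 1) s (by linarith) h).symm
    have hpne : levyPdf μ σ s ≠ 0 := (levyPdf_pos hσ hs).ne'
    rw [← hrr, hrdef]
    simp only
    field_simp
  have hKval : K = 2 := by
    have hL1 : Tendsto (fun t => (ν (Iic t)).toReal) atTop (nhds 1) := by
      have h0 := tendsto_measure_Iic_atTop (μ := ν)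
      have h1 := (ENNReal.tendsto_toReal (measure_ne_top ν univ)).comp h0
      simpa [measure_univ, Function.comp_def] using h1
    have hU : ⋃ t : ℝ, Ioc μ t = Ioi μ := by
      ext x
      simp only [mem_iUnion, mem_Ioc, mem_Ioi]
      exact ⟨fun ⟨t, h⟩ => h.1, fun h => ⟨x, h, le_rfl⟩⟩
    have hL2 : Tendsto (fun t : ℝ => ∫ s in Ioc μ t, levyPdf μ σ s) atTop (nhds 1) := by
      have h2 := tendsto_setIntegral_of_monotone (s := fun t : ℝ => Ioc μ t)
        (fun t => measurableSet_Ioc) (fun t₁ t₂ h => Ioc_subset_Ioc le_rfl h)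
        (by rw [hU]; exact (levyPdf_int_and_mass hσ).1)
      rw [hU, (levyPdf_int_and_mass hσ).2] at h2
      exact h2
    have hL3 : Tendsto (fun t => (ν (Iic t)).toReal) atTop (nhds (1 / 2 * K * 1)) := by
      refine Tendsto.congr' ?_ (hL2.const_mul (1 / 2 * K))
      filter_upwards [eventually_gt_atTop μ] with t ht
      rw [key0 t ht, ← integral_const_mul]
      refine (setIntegral_congr_fun measurableSet_Ioc (fun s hs => ?_)).symm
      rw [hDdef]
      simp only
      rw [hKp s hs.1]
      ring
    have := tendsto_nhds_unique hL1 hL3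
    linarith
  have hDp : ∀ s, μ < s → D s = levyPdf μ σ s := by
    intro s hs
    rw [hDdef]
    simp only
    rw [hKp s hs, hKval]
    ring
  refine Measure.ext_of_Iic ν (levyM μ σ) (fun u => ?_)
  rcases le_or_gt u μ with hu | hu
  · rw [levyM_Iic_le hu]
    refine le_antisymm ?_ zero_le
    have hsub : Iic u ⊆ {x : ℝ | ¬ μ < x} := fun x hx => by
      simp only [mem_setOf_eq, not_lt]
      exact le_trans (mem_Iic.mp hx) hu
    calc ν (Iic u) ≤ ν {x : ℝ | ¬ μ < x} := measure_mono hsub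
      _ = 0 := by rw [← ae_iff.mp hae]
  · rw [levyM_Iic hσ hu, ← ENNReal.ofReal_toReal (measure_ne_top ν (Iic u)), key0 u hu]
    congr 1
    exact setIntegral_congr_fun measurableSet_Ioc (fun s hs => hDp s hs.1)

theorem levy_fixed_point_characterization
    {Ω : Type*} [MeasurableSpace Ω] (ℙ : Measure Ω) [IsProbabilityMeasure ℙ]
    (X : Ω → ℝ) (hX : Measurable X)
    (μ σ : ℝ) (hσ : 0 < σ)
    (hXgt : ∀ᵐ ω ∂ℙ, μ < X ω)
    (hint1 : Integrable (fun ω => (X ω - μ)⁻¹) ℙ)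
    (hint2 : Integrable (fun ω => ((X ω - μ) ^ 2)⁻¹) ℙ) :
    Measure.map X ℙ = volume.withDensity
        (fun x => ENNReal.ofReal
          (if μ < x then
            Real.sqrt (σ / (2 * π)) * (x - μ) ^ (-(3 : ℝ) / 2) *
              Real.exp (-(σ / (2 * (x - μ)))) else 0)) ↔
      ∀ t > μ, (ℙ {ω | X ω ≤ t}).toReal =
        (1 / 2) * ∫ ω, (3 / (X ω - μ) - σ / (X ω - μ) ^ 2) * (min (X ω) t - μ) ∂ℙ := by
  classical
  set ν : Measure ℝ := Measure.map X ℙ with hν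
  have hprob : IsProbabilityMeasure ν := Measure.isProbabilityMeasure_map hX.aemeasurable
  haveI := hprob
  haveI := levyM_isProb (μ := μ) hσ
  have hae : ∀ᵐ x ∂ν, μ < x := by
    rw [hν]
    exact (ae_map_iff hX.aemeasurable measurableSet_Ioi).2 hXgt
  have hgmeas : Measurable (levyG μ σ) := levyG_meas μ σ
  have hg : Integrable (levyG μ σ) ν := by
    rw [hν, integrable_map_measure hgmeas.aestronglyMeasurable hX.aemeasurable]
    have : (levyG μ σ) ∘ X = fun ω => 3 * (X ω - μ)⁻¹ - σ * ((X ω - μ) ^ 2)⁻¹ := by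
      funext ω; simp [levyG, Function.comp, div_eq_mul_inv]
    rw [this]
    exact (hint1.const_mul 3).sub (hint2.const_mul σ)
  have hmeasP : ∀ t : ℝ, ℙ {ω | X ω ≤ t} = ν (Iic t) := fun t => by
    rw [hν, Measure.map_apply hX measurableSet_Iic]; rfl
  have hIntConv : ∀ t : ℝ, (∫ ω, (3 / (X ω - μ) - σ / (X ω - μ) ^ 2) * (min (X ω) t - μ) ∂ℙ)
      = ∫ x, levyG μ σ x * (min x t - μ) ∂ν := fun t => by
    have hmm : AEStronglyMeasurable (fun x : ℝ => levyG μ σ x * (min x t - μ)) (Measure.map X ℙ) :=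
      (hgmeas.mul ((measurable_id.min measurable_const).sub_const μ)).aestronglyMeasurable
    rw [hν, integral_map hX.aemeasurable hmm]
    rfl
  constructor
  · intro hmap t ht
    have hm : ν = levyM μ σ := hmap
    have hg' : Integrable (levyG μ σ) (levyM μ σ) := hm ▸ hg
    rw [hmeasP t, hIntConv t, hm, levyM_Iic hσ ht,
      ENNReal.toReal_ofReal (integral_nonneg (fun x => levyPdf_nonneg μ σ x)),
      fubini_min _ levyM_ae_gt hg' ht, ← integral_const_mul]
    refine (setIntegral_congr_fun measurableSet_Ioc (fun s hs => ?_)).symm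
    have htail := levyPdf_tail_integral hσ (hs.1 : μ < s)
    simp_rw [mul_assoc] at htail
    rw [integral_const_mul] at htail
    rw [levyM_setIntegral, htail]
  · intro hfix
    have hfix' : ∀ t, μ < t → (ν (Iic t)).toReal
        = (1 / 2) * ∫ x, levyG μ σ x * (min x t - μ) ∂ν := by
      intro t ht
      rw [← hmeasP t, ← hIntConv t]
      exact hfix t ht
    exact levy_backward hσ ν hae hg hfix'
end

section
/- Let p be a positive, continuously differentiable probability density on ℝ satisfying ∫(1+|x|)|p'(x)|dx < ∞, and let X be a random variable with density p. Then for Lebesgue-almost every t ∈ ℝ, p(t) = E[(p'(X)/p(X))·1{X ≤ t}]. -/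
open MeasureTheory Real Filter Set Topology NNReal ENNReal

theorem density_representation_real_line
    {Ω : Type*} [MeasurableSpace Ω] (ℙ : Measure Ω) [IsProbabilityMeasure ℙ]
    (X : Ω → ℝ) (hX : Measurable X)
    (p : ℝ → ℝ) (hp_pos : ∀ x, 0 < p x) (hp_smooth : ContDiff ℝ 1 p)
    (hp_int : ∫ x, p x = 1)
    (hC3 : Integrable (fun x => (1 + |x|) * |deriv p x|))
    (hlaw : Measure.map X ℙ = volume.withDensity fun x => ENNReal.ofReal (p x)) :
    ∀ᵐ t ∂(volume : Measure ℝ),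
      p t = ∫ ω, deriv p (X ω) / p (X ω) *
        Set.indicator (Iic t) (fun _ => (1 : ℝ)) (X ω) ∂ℙ := by
  have hpc : Continuous p := hp_smooth.continuous
  have hp'c : Continuous (deriv p) := hp_smooth.continuous_deriv le_rfl
  have hp'int : Integrable (deriv p) := by
    refine hC3.mono' hp'c.aestronglyMeasurable ?_
    filter_upwards with x
    have h1 : (1:ℝ) ≤ 1 + |x| := le_add_of_nonneg_right (abs_nonneg x)
    calc ‖deriv p x‖ = 1 * |deriv p x| := by rw [one_mul, Real.norm_eq_abs]
      _ ≤ (1 + |x|) * |deriv p x| := mul_le_mul_of_nonneg_right h1 (abs_nonneg _)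
  have hderiv : ∀ x, HasDerivAt p (deriv p x) x :=
    fun x => (hp_smooth.differentiable one_ne_zero x).hasDerivAt
  have hlim : Tendsto p atBot (𝓝 (limUnder atBot p)) :=
    tendsto_limUnder_of_hasDerivAt_of_integrableOn_Iic (a := 0)
      (fun x _ => hderiv x) hp'int.integrableOn
  -- p is integrable
  have hlint : ∫⁻ x, ENNReal.ofReal (p x) = 1 := by
    have h1 : (Measure.map X ℙ) univ = 1 := by
      rw [Measure.map_apply hX MeasurableSet.univ]; simp
    rw [hlaw] at h1
    rwa [withDensity_apply _ MeasurableSet.univ, setLIntegral_univ] at h1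
  have hpint : Integrable p := by
    refine ⟨hpc.aestronglyMeasurable, ?_⟩
    rw [hasFiniteIntegral_iff_ofReal (Eventually.of_forall fun x => (hp_pos x).le), hlint]
    exact ENNReal.one_lt_top
  have hlim0 : limUnder atBot p = 0 := by
    refine IntegrableAtFilter.eq_zero_of_tendsto
      ⟨Iic 0, Iic_mem_atBot 0, hpint.integrableOn⟩ ?_ hlim
    intro s hs
    rcases mem_atBot_sets.1 hs with ⟨b, hb⟩
    refine le_antisymm le_top ?_
    rw [← Real.volume_Iic (a := b)]
    exact measure_mono hb
  rw [hlim0] at hlim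
  have key : ∀ t, ∫ x in Iic t, deriv p x = p t := by
    intro t
    rw [integral_Iic_of_hasDerivAt_of_tendsto' (fun x _ => hderiv x)
      hp'int.integrableOn hlim, sub_zero]
  filter_upwards with t
  have hgm : AEStronglyMeasurable
      (fun x => deriv p x / p x * Set.indicator (Iic t) (fun _ => (1:ℝ)) x)
      (Measure.map X ℙ) := by
    refine AEStronglyMeasurable.mul ?_ ?_
    · exact (hp'c.div hpc (fun x => (hp_pos x).ne')).aestronglyMeasurable
    · exact ((measurable_one.indicator measurableSet_Iic)).aestronglyMeasurable
  rw [← integral_map hX.aemeasurable hgm, hlaw]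
  have hof : (fun x => ENNReal.ofReal (p x)) = fun x => ((Real.toNNReal (p x) : ℝ≥0) : ℝ≥0∞) :=
    rfl
  rw [hof, integral_withDensity_eq_integral_smul
    (hpc.measurable.real_toNNReal : Measurable fun x => Real.toNNReal (p x))]
  have : ∀ x, (Real.toNNReal (p x)) •
      (deriv p x / p x * Set.indicator (Iic t) (fun _ => (1:ℝ)) x)
      = Set.indicator (Iic t) (deriv p) x := by
    intro x
    have hne : p x ≠ 0 := (hp_pos x).ne'
    rw [NNReal.smul_def, Real.coe_toNNReal _ (hp_pos x).le, smul_eq_mul]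
    by_cases hx : x ∈ Iic t
    · simp only [Set.indicator_of_mem hx]
      field_simp
    · simp [Set.indicator_of_notMem hx]
  simp_rw [this]
  rw [integral_indicator measurableSet_Iic, key t]
end
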